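/- arXiv:1402.2700 — 5 statements merged into one kernel-verified Lean document; each statement's English description precedes it below -/
import Mathlib

section
/- Every finite bowtie-free graph G is a (not necessarily induced) subgraph of a finite good bowtie-free graph G', i.e., a bowtie-free graph in which every vertex is contained in a copy of some chimney C_n (n ≥ 2) or in a copy of K4. -/
/-- A triangle in a graph: a set of 3 pairwise adjacent vertices. -/
def IsTriangle {V : Type*} (G : SimpleGraph V) (t : Finset V) : Prop :=
  t.card = 3 ∧ ∀ u ∈ t, ∀ v ∈ t, u ≠ v → G.Adj u v

/-- `G` contains a bowtie (two triangles sharing exactly one vertex) as a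
not-necessarily-induced subgraph. -/
def HasBowtie {V : Type*} (G : SimpleGraph V) : Prop :=
  ∃ a b c d e : V, a ≠ b ∧ a ≠ c ∧ a ≠ d ∧ a ≠ e ∧ b ≠ c ∧ b ≠ d ∧ b ≠ e ∧
    c ≠ d ∧ c ≠ e ∧ d ≠ e ∧
    G.Adj a b ∧ G.Adj a c ∧ G.Adj b c ∧ G.Adj a d ∧ G.Adj a e ∧ G.Adj d e

/-- The `n`-chimney: vertices `inl 0 = u_L`, `inl 1 = u_R` forming the central edge,
and `inr i = v_i` each adjacent to both `u_L` and `u_R`, with no other edges. -/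
def chimney (n : ℕ) : SimpleGraph (Fin 2 ⊕ Fin n) where
  Adj u v := u ≠ v ∧ (u.isLeft ∨ v.isLeft)
  symm := ⟨fun _ _ h => ⟨h.1.symm, h.2.symm⟩⟩
  loopless := ⟨fun _ h => h.1 rfl⟩

/-- `v` lies in a (not necessarily induced) copy of `H` inside `G`. -/
def InCopy {W V : Type*} (H : SimpleGraph W) (G : SimpleGraph V) (v : V) : Prop :=
  ∃ f : W ↪ V, (∀ a b, H.Adj a b → G.Adj (f a) (f b)) ∧ v ∈ Set.range f

/-- A graph is good if every vertex is contained in a copy of a chimney `C_n` (`n ≥ 2`)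
or of `K₄`. -/
def GoodGraph {V : Type*} (G : SimpleGraph V) : Prop :=
  ∀ v : V, (∃ n, 2 ≤ n ∧ InCopy (chimney n) G v) ∨ InCopy (⊤ : SimpleGraph (Fin 4)) G v

namespace BT

variable {V : Type*} (G : SimpleGraph V)

def Tri (v x y : V) : Prop := G.Adj v x ∧ G.Adj v y ∧ G.Adj x y

def InC2 (v : V) : Prop := ∃ a b c d : V, c ≠ d ∧ G.Adj a b ∧ G.Adj c a ∧ G.Adj c b ∧
  G.Adj d a ∧ G.Adj d b ∧ (v = a ∨ v = b ∨ v = c ∨ v = d)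

def NoTri (v : V) : Prop := ∀ x y, ¬ Tri G v x y

def Iso (v : V) : Prop := (∃ x y, Tri G v x y) ∧ ¬ InC2 G v

variable {G}

lemma not_noTri_of_iso {v : V} (h : Iso G v) : ¬ NoTri G v := by
  obtain ⟨⟨x, y, ht⟩, -⟩ := h
  exact fun hn => hn x y ht

/-- H1: uniqueness (up to swap) of the triangle through the non-InC2 vertex `v`. -/
lemma H1 (hbf : ¬ HasBowtie G) {v x y : V} (hc2 : ¬ InC2 G v) (ht : Tri G v x y)
    {a b : V} (hva : G.Adj v a) (hvb : G.Adj v b) (hab : G.Adj a b) :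
    (a = x ∧ b = y) ∨ (a = y ∧ b = x) := by
  obtain ⟨hvx, hvy, hxy⟩ := ht
  by_cases hax : a = x
  · refine Or.inl ⟨hax, ?_⟩
    by_contra hby
    exact hc2 ⟨v, a, y, b, fun h => hby h.symm, hva, hvy.symm,
      (by rw [hax]; exact hxy.symm), hvb.symm, hab.symm, Or.inl rfl⟩
  · by_cases hay : a = y
    · refine Or.inr ⟨hay, ?_⟩
      by_contra hbx
      exact hc2 ⟨v, a, x, b, fun h => hbx h.symm, hva, hvx.symm,
        (by rw [hay]; exact hxy), hvb.symm, hab.symm, Or.inl rfl⟩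
    · by_cases hbx : b = x
      · exact absurd ⟨v, b, y, a, fun h => hay h.symm, hvb, hvy.symm,
          (by rw [hbx]; exact hxy.symm), hva.symm, hab, Or.inl rfl⟩ hc2
      · by_cases hby : b = y
        · exact absurd ⟨v, b, x, a, fun h => hax h.symm, hvb, hvx.symm,
            (by rw [hby]; exact hxy), hva.symm, hab, Or.inl rfl⟩ hc2
        · exact absurd ⟨v, x, y, a, b, hvx.ne, hvy.ne, hva.ne, hvb.ne, hxy.ne,
            Ne.symm hax, Ne.symm hbx, Ne.symm hay, Ne.symm hby, hab.ne,
            hvx, hvy, hxy, hva, hvb, hab⟩ hbf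

/-- H2: a triangle through `x` (a neighbour in the unique triangle of `v`). -/
lemma H2 (hbf : ¬ HasBowtie G) {v x y : V} (hc2 : ¬ InC2 G v) (ht : Tri G v x y)
    {p q : V} (hxp : G.Adj x p) (hxq : G.Adj x q) (hpq : G.Adj p q) :
    (p = v ∧ q = y) ∨ (p = y ∧ q = v) := by
  obtain ⟨hvx, hvy, hxy⟩ := ht
  by_cases hpv : p = v
  · refine Or.inl ⟨hpv, ?_⟩
    rcases H1 hbf hc2 ⟨hvx, hvy, hxy⟩ hvx (by rw [← hpv]; exact hpq) hxq with ⟨-, h⟩ | ⟨h, -⟩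
    · exact h
    · exact absurd h hxy.ne
  · by_cases hqv : q = v
    · refine Or.inr ⟨?_, hqv⟩
      rcases H1 hbf hc2 ⟨hvx, hvy, hxy⟩ hvx (by rw [← hqv]; exact hpq.symm) hxp with ⟨-, h⟩ | ⟨h, -⟩
      · exact h
      · exact absurd h hxy.ne
    · by_cases hpy : p = y
      · exact absurd ⟨x, p, v, q, Ne.symm hqv, hxp, hvx,
          (by rw [hpy]; exact hvy), hxq.symm, hpq.symm, Or.inr (Or.inr (Or.inl rfl))⟩ hc2
      · by_cases hqy : q = y
        · exact absurd ⟨x, q, v, p, Ne.symm hpv, hxq, hvx,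
            (by rw [hqy]; exact hvy), hxp.symm, hpq, Or.inr (Or.inr (Or.inl rfl))⟩ hc2
        · exact absurd ⟨x, v, y, p, q, hvx.ne.symm, hxy.ne, hxp.ne, hxq.ne, hvy.ne,
            Ne.symm hpv, Ne.symm hqv, Ne.symm hpy, Ne.symm hqy, hpq.ne,
            hvx.symm, hxy, hvy, hxp, hxq, hpq⟩ hbf



variable (G) in
/-- The set of vertices of the (unique, in the isolated case) triangle through `v`. -/
def tset (v : V) : Set V := {u | u = v ∨ (G.Adj v u ∧ ∃ w, G.Adj v w ∧ G.Adj u w)}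

lemma self_mem_tset (v : V) : v ∈ tset G v := Or.inl rfl

lemma mem_tset_of_tri {v x y : V} (ht : Tri G v x y) : x ∈ tset G v ∧ y ∈ tset G v :=
  ⟨Or.inr ⟨ht.1, y, ht.2.1, ht.2.2⟩, Or.inr ⟨ht.2.1, x, ht.1, ht.2.2.symm⟩⟩

/-- For an isolated vertex, `tset` is the vertex set of its triangle. -/
lemma tset_eq (hbf : ¬ HasBowtie G) {v x y : V} (hc2 : ¬ InC2 G v) (ht : Tri G v x y) :
    tset G v = {v, x, y} := by
  ext u
  constructor
  · rintro (rfl | ⟨hvu, w, hvw, huw⟩)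
    · exact Or.inl rfl
    · rcases H1 hbf hc2 ht hvu hvw huw with ⟨rfl, -⟩ | ⟨rfl, -⟩
      · exact Or.inr (Or.inl rfl)
      · exact Or.inr (Or.inr rfl)
  · rintro (rfl | rfl | rfl)
    · exact self_mem_tset u
    · exact (mem_tset_of_tri ht).1
    · exact (mem_tset_of_tri ht).2

lemma tset_eq_x (hbf : ¬ HasBowtie G) {v x y : V} (hc2 : ¬ InC2 G v) (ht : Tri G v x y) :
    tset G x = {v, x, y} := by
  obtain ⟨hvx, hvy, hxy⟩ := ht
  ext u
  constructor
  · rintro (rfl | ⟨hxu, w, hxw, huw⟩)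
    · exact Or.inr (Or.inl rfl)
    · rcases H2 hbf hc2 ⟨hvx, hvy, hxy⟩ hxu hxw huw with ⟨rfl, -⟩ | ⟨rfl, -⟩
      · exact Or.inl rfl
      · exact Or.inr (Or.inr rfl)
  · rintro (rfl | rfl | rfl)
    · exact (mem_tset_of_tri ⟨hvx.symm, hxy, hvy⟩).1
    · exact self_mem_tset u
    · exact (mem_tset_of_tri ⟨hvx.symm, hxy, hvy⟩).2

lemma tri_swap {v x y : V} (ht : Tri G v x y) : Tri G v y x := ⟨ht.2.1, ht.1, ht.2.2.symm⟩

lemma tset_eq_y (hbf : ¬ HasBowtie G) {v x y : V} (hc2 : ¬ InC2 G v) (ht : Tri G v x y) :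
    tset G y = {v, x, y} := by
  have h := tset_eq_x hbf hc2 (tri_swap ht)
  rw [h]
  ext u; simp only [Set.mem_insert_iff, Set.mem_singleton_iff]; tauto

/-- L2b: any triangle meeting the (unique) triangle of an isolated vertex equals it. -/
lemma L2b (hbf : ¬ HasBowtie G) {v x y : V} (hc2 : ¬ InC2 G v) (ht : Tri G v x y)
    {u p q : V} (hu : u ∈ ({v, x, y} : Set V))
    (hup : G.Adj u p) (huq : G.Adj u q) (hpq : G.Adj p q) :
    ({u, p, q} : Set V) = {v, x, y} := by
  have perm : ∀ a b c : V, ({a, b, c} : Set V) = {a, c, b} := by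
    intro a b c; ext t; simp only [Set.mem_insert_iff, Set.mem_singleton_iff]; tauto
  rcases hu with rfl | rfl | rfl
  · rcases H1 hbf hc2 ht hup huq hpq with ⟨rfl, rfl⟩ | ⟨rfl, rfl⟩
    · rfl
    · exact perm _ _ _
  · rcases H2 hbf hc2 ht hup huq hpq with ⟨rfl, rfl⟩ | ⟨rfl, rfl⟩
    · ext t; simp only [Set.mem_insert_iff, Set.mem_singleton_iff]; tauto
    · ext t; simp only [Set.mem_insert_iff, Set.mem_singleton_iff]; tauto
  · rcases H2 hbf hc2 (tri_swap ht) hup huq hpq with ⟨rfl, rfl⟩ | ⟨rfl, rfl⟩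
    · ext t; simp only [Set.mem_insert_iff, Set.mem_singleton_iff]; tauto
    · ext t; simp only [Set.mem_insert_iff, Set.mem_singleton_iff]; tauto

/-- For an isolated vertex, any triangle meeting `tset v` has vertex set `tset v`. -/
lemma L2c (hbf : ¬ HasBowtie G) {v : V} (hi : Iso G v) {u p q : V} (hu : u ∈ tset G v)
    (hup : G.Adj u p) (huq : G.Adj u q) (hpq : G.Adj p q) :
    ({u, p, q} : Set V) = tset G v := by
  obtain ⟨⟨x, y, ht⟩, hc2⟩ := hi
  rw [tset_eq hbf hc2 ht] at hu ⊢
  exact L2b hbf hc2 ht hu hup huq hpq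

lemma mem_tri_exists {v x y u : V} (ht : Tri G v x y) (hu : u ∈ ({v, x, y} : Set V)) :
    ∃ p q, G.Adj u p ∧ G.Adj u q ∧ G.Adj p q ∧ ({u, p, q} : Set V) = {v, x, y} := by
  obtain ⟨hvx, hvy, hxy⟩ := ht
  rcases hu with rfl | rfl | rfl
  · exact ⟨x, y, hvx, hvy, hxy, rfl⟩
  · refine ⟨v, y, hvx.symm, hxy, hvy, ?_⟩
    ext t; simp only [Set.mem_insert_iff, Set.mem_singleton_iff]; tauto
  · refine ⟨v, x, hvy.symm, hxy.symm, hvx, ?_⟩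
    ext t; simp only [Set.mem_insert_iff, Set.mem_singleton_iff]; tauto

/-- L3: two isolated vertices whose triangle sets meet have the same triangle set. -/
lemma L3 (hbf : ¬ HasBowtie G) {v v' u : V} (hi : Iso G v) (hi' : Iso G v')
    (hu : u ∈ tset G v) (hu' : u ∈ tset G v') : tset G v = tset G v' := by
  obtain ⟨⟨x', y', ht'⟩, hc2'⟩ := hi'
  have htv' := tset_eq hbf hc2' ht'
  rw [htv'] at hu'
  obtain ⟨p, q, hup, huq, hpq, hset⟩ := mem_tri_exists ht' hu'
  calc tset G v = {u, p, q} := (L2c hbf hi hu hup huq hpq).symm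
    _ = {v', x', y'} := hset
    _ = tset G v' := htv'.symm



/-- A canonical pair of adjacent vertices in `tset G v` (depends only on `tset G v`). -/
noncomputable def epair {V' : Type*} (G : SimpleGraph V') (v : V') : V' × V' :=
  open scoped Classical in
  if h : ∃ p : V' × V', p.1 ∈ tset G v ∧ p.2 ∈ tset G v ∧ G.Adj p.1 p.2 then h.choose
  else (v, v)

lemma epair_ex {v : V} (hi : Iso G v) :
    ∃ p : V × V, p.1 ∈ tset G v ∧ p.2 ∈ tset G v ∧ G.Adj p.1 p.2 := by
  obtain ⟨⟨x, y, ht⟩, -⟩ := hi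
  exact ⟨(x, y), (mem_tset_of_tri ht).1, (mem_tset_of_tri ht).2, ht.2.2⟩

lemma epair_spec {v : V} (hi : Iso G v) :
    (epair G v).1 ∈ tset G v ∧ (epair G v).2 ∈ tset G v ∧ G.Adj (epair G v).1 (epair G v).2 := by
  have h := epair_ex hi
  rw [epair, dif_pos h]
  exact h.choose_spec

lemma epair_congr {v v' : V} (h : tset G v = tset G v') (hi : Iso G v) :
    epair G v = epair G v' := by
  have h1 := epair_ex hi
  have h2 : ∃ p : V × V, p.1 ∈ tset G v' ∧ p.2 ∈ tset G v' ∧ G.Adj p.1 p.2 := h ▸ h1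
  rw [epair, epair, dif_pos h1, dif_pos h2]
  congr 1
  rw [h]



open Sum

variable (G) in
/-- One-sided adjacency for the extended graph. -/
def A : (V ⊕ V × Fin 5) → (V ⊕ V × Fin 5) → Prop
  | inl u, inl w => G.Adj u w
  | inl u, inr (v, i) =>
      (NoTri G v ∧ u = v ∧ i.val < 2) ∨
      (Iso G v ∧ i = 4 ∧ (u = (epair G v).1 ∨ u = (epair G v).2))
  | inr _, inl _ => False
  | inr (v, i), inr (w, j) =>
      v = w ∧ i ≠ j ∧ (i.val < 2 ∨ j.val < 2) ∧ (Iso G v → i ≠ 4 ∧ j ≠ 4)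

variable (G) in
/-- The extended graph. -/
noncomputable def Gp : SimpleGraph (V ⊕ V × Fin 5) where
  Adj a b := A G a b ∨ A G b a
  symm := ⟨fun a b h => h.symm⟩
  loopless := by
    refine ⟨?_⟩
    rintro (u | ⟨v, i⟩) h
    · exact G.irrefl (h.elim id id)
    · exact (h.elim id id).2.1 rfl

lemma adj_ll {u w : V} : (Gp G).Adj (inl u) (inl w) ↔ G.Adj u w := by
  constructor
  · rintro (h | h)
    · exact h
    · exact h.symm
  · exact fun h => Or.inl h

lemma adj_lr {u v : V} {i : Fin 5} : (Gp G).Adj (inl u) (inr (v, i)) ↔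
    ((NoTri G v ∧ u = v ∧ i.val < 2) ∨
      (Iso G v ∧ i = 4 ∧ (u = (epair G v).1 ∨ u = (epair G v).2))) := by
  constructor
  · rintro (h | h)
    · exact h
    · exact h.elim
  · exact fun h => Or.inl h

lemma adj_rl {u v : V} {i : Fin 5} : (Gp G).Adj (inr (v, i)) (inl u) ↔
    ((NoTri G v ∧ u = v ∧ i.val < 2) ∨
      (Iso G v ∧ i = 4 ∧ (u = (epair G v).1 ∨ u = (epair G v).2))) := by
  rw [(Gp G).adj_comm]; exact adj_lr

lemma adj_rr {v w : V} {i j : Fin 5} : (Gp G).Adj (inr (v, i)) (inr (w, j)) ↔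
    (v = w ∧ i ≠ j ∧ (i.val < 2 ∨ j.val < 2) ∧ (Iso G v → i ≠ 4 ∧ j ≠ 4)) := by
  constructor
  · rintro (⟨h1, h2, h3, h4⟩ | ⟨h1, h2, h3, h4⟩)
    · exact ⟨h1, h2, h3, h4⟩
    · subst h1
      exact ⟨rfl, Ne.symm h2, h3.symm, fun hI => (h4 hI).symm⟩
  · exact fun h => Or.inl h



/-- Abbreviation for the vertex type of the extended graph. -/
abbrev Wt (V : Type*) := V ⊕ V × Fin 5

/-- Helper to prove 3-element set equalities. -/
lemma set3 {α : Type*} {a b c x y z : α}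
    (h : (a = x ∧ b = y ∧ c = z) ∨ (a = x ∧ b = z ∧ c = y) ∨ (a = y ∧ b = x ∧ c = z) ∨
      (a = y ∧ b = z ∧ c = x) ∨ (a = z ∧ b = x ∧ c = y) ∨ (a = z ∧ b = y ∧ c = x)) :
    ({a, b, c} : Set α) = {x, y, z} := by
  ext t; simp only [Set.mem_insert_iff, Set.mem_singleton_iff]
  rcases h with ⟨rfl, rfl, rfl⟩ | ⟨rfl, rfl, rfl⟩ | ⟨rfl, rfl, rfl⟩ | ⟨rfl, rfl, rfl⟩ |
    ⟨rfl, rfl, rfl⟩ | ⟨rfl, rfl, rfl⟩ <;> tauto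

/-- The classification of triangles in the extended graph. -/
abbrev TClass (G : SimpleGraph V) (a b c : Wt V) : Prop :=
  (∃ p q r, a = inl p ∧ b = inl q ∧ c = inl r ∧ Tri G p q r) ∨
  (∃ v, Iso G v ∧ ({a, b, c} : Set (Wt V)) =
    {inl (epair G v).1, inl (epair G v).2, inr (v, (4 : Fin 5))}) ∨
  (∃ v, NoTri G v ∧ ({a, b, c} : Set (Wt V)) =
    {inl v, inr (v, (0 : Fin 5)), inr (v, (1 : Fin 5))}) ∨
  (∃ v, ∃ k : Fin 5, (k = 2 ∨ k = 3 ∨ (k = 4 ∧ ¬ Iso G v)) ∧ ({a, b, c} : Set (Wt V)) =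
    {inr (v, (0 : Fin 5)), inr (v, (1 : Fin 5)), inr (v, k)})

lemma aux_llr {p q : V} {v : V} {i : Fin 5}
    (hab : (Gp G).Adj (inl p) (inl q)) (hac : (Gp G).Adj (inl p) (inr (v, i)))
    (hbc : (Gp G).Adj (inl q) (inr (v, i))) :
    TClass G (inl p) (inl q) (inr (v, i)) := by
  have hpq : G.Adj p q := adj_ll.mp hab
  rcases adj_lr.mp hac with ⟨hn, rfl, hi⟩ | ⟨hI, rfl, hp⟩
  · rcases adj_lr.mp hbc with ⟨-, hq, -⟩ | ⟨hI, h4, -⟩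
    · exact absurd hq.symm hpq.ne
    · exact (not_noTri_of_iso hI hn).elim
  · rcases adj_lr.mp hbc with ⟨hn, -, hj⟩ | ⟨-, -, hq⟩
    · exact (not_noTri_of_iso hI hn).elim
    · refine Or.inr (Or.inl ⟨v, hI, set3 ?_⟩)
      rcases hp with rfl | rfl <;> rcases hq with rfl | rfl
      · exact absurd rfl hpq.ne
      · exact Or.inl ⟨rfl, rfl, rfl⟩
      · exact Or.inr (Or.inr (Or.inl ⟨rfl, rfl, rfl⟩))
      · exact absurd rfl hpq.ne

lemma aux_lrr {u : V} {v w : V} {i j : Fin 5}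
    (hab : (Gp G).Adj (inl u) (inr (v, i))) (hac : (Gp G).Adj (inl u) (inr (w, j)))
    (hbc : (Gp G).Adj (inr (v, i)) (inr (w, j))) :
    TClass G (inl u) (inr (v, i)) (inr (w, j)) := by
  obtain ⟨rfl, hij, hlt, hguard⟩ := adj_rr.mp hbc
  rcases adj_lr.mp hab with ⟨hn, rfl, hi⟩ | ⟨hI, rfl, -⟩
  · rcases adj_lr.mp hac with ⟨-, -, hj⟩ | ⟨hI, rfl, -⟩
    · have hvij : i.val ≠ j.val := fun h => hij (Fin.ext h)
      refine Or.inr (Or.inr (Or.inl ⟨u, hn, set3 ?_⟩))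
      have : (i = 0 ∧ j = 1) ∨ (i = 1 ∧ j = 0) := by
        simp only [Fin.ext_iff]; omega
      rcases this with ⟨rfl, rfl⟩ | ⟨rfl, rfl⟩
      · exact Or.inl ⟨rfl, rfl, rfl⟩
      · exact Or.inr (Or.inl ⟨rfl, rfl, rfl⟩)
    · exact absurd (hguard hI).2 (by simp)
  · exact absurd (hguard hI).1 (by simp)

lemma aux_rrr {v w x : V} {i j k : Fin 5}
    (hab : (Gp G).Adj (inr (v, i)) (inr (w, j))) (hac : (Gp G).Adj (inr (v, i)) (inr (x, k)))
    (hbc : (Gp G).Adj (inr (w, j)) (inr (x, k))) :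
    TClass G (inr (v, i)) (inr (w, j)) (inr (x, k)) := by
  obtain ⟨rfl, hij, hltij, hgij⟩ := adj_rr.mp hab
  obtain ⟨rfl, hik, hltik, hgik⟩ := adj_rr.mp hac
  obtain ⟨-, hjk, hltjk, hgjk⟩ := adj_rr.mp hbc
  have hvij : i.val ≠ j.val := fun h => hij (Fin.ext h)
  have hvik : i.val ≠ k.val := fun h => hik (Fin.ext h)
  have hvjk : j.val ≠ k.val := fun h => hjk (Fin.ext h)
  refine Or.inr (Or.inr (Or.inr ?_))
  by_cases hk2 : k.val < 2
  · by_cases hj2 : j.val < 2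
    · -- i is the big one
      have hi2 : ¬ i.val < 2 := by omega
      have hjk01 : (j = 0 ∧ k = 1) ∨ (j = 1 ∧ k = 0) := by simp only [Fin.ext_iff]; omega
      have hi234 : i = 2 ∨ i = 3 ∨ i = 4 := by simp only [Fin.ext_iff]; omega
      refine ⟨v, i, ?_, set3 ?_⟩
      · rcases hi234 with rfl | rfl | rfl
        · exact Or.inl rfl
        · exact Or.inr (Or.inl rfl)
        · exact Or.inr (Or.inr ⟨rfl, fun hI => (hgij hI).1 rfl⟩)
      · rcases hjk01 with ⟨rfl, rfl⟩ | ⟨rfl, rfl⟩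
        · exact Or.inr (Or.inr (Or.inr (Or.inr (Or.inl ⟨rfl, rfl, rfl⟩))))
        · exact Or.inr (Or.inr (Or.inr (Or.inr (Or.inr ⟨rfl, rfl, rfl⟩))))
    · -- j is the big one
      have hi2 : i.val < 2 := by rcases hltij with h | h; exact h; omega
      have hik01 : (i = 0 ∧ k = 1) ∨ (i = 1 ∧ k = 0) := by simp only [Fin.ext_iff]; omega
      have hj234 : j = 2 ∨ j = 3 ∨ j = 4 := by simp only [Fin.ext_iff]; omega
      refine ⟨v, j, ?_, set3 ?_⟩
      · rcases hj234 with rfl | rfl | rfl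
        · exact Or.inl rfl
        · exact Or.inr (Or.inl rfl)
        · exact Or.inr (Or.inr ⟨rfl, fun hI => (hgij hI).2 rfl⟩)
      · rcases hik01 with ⟨rfl, rfl⟩ | ⟨rfl, rfl⟩
        · exact Or.inr (Or.inl ⟨rfl, rfl, rfl⟩)
        · exact Or.inr (Or.inr (Or.inr (Or.inl ⟨rfl, rfl, rfl⟩)))
  · -- k is the big one
    have hi2 : i.val < 2 := by rcases hltik with h | h; exact h; omega
    have hj2 : j.val < 2 := by rcases hltjk with h | h; exact h; omega
    have hij01 : (i = 0 ∧ j = 1) ∨ (i = 1 ∧ j = 0) := by simp only [Fin.ext_iff]; omega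
    have hk234 : k = 2 ∨ k = 3 ∨ k = 4 := by simp only [Fin.ext_iff]; omega
    refine ⟨v, k, ?_, set3 ?_⟩
    · rcases hk234 with rfl | rfl | rfl
      · exact Or.inl rfl
      · exact Or.inr (Or.inl rfl)
      · exact Or.inr (Or.inr ⟨rfl, fun hI => (hgik hI).2 rfl⟩)
    · rcases hij01 with ⟨rfl, rfl⟩ | ⟨rfl, rfl⟩
      · exact Or.inl ⟨rfl, rfl, rfl⟩
      · exact Or.inr (Or.inr (Or.inl ⟨rfl, rfl, rfl⟩))



lemma TClass_swap23 {a b c : Wt V} (h : TClass G a c b) : TClass G a b c := by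
  have hset : ({a, c, b} : Set (Wt V)) = {a, b, c} := by
    ext t; simp only [Set.mem_insert_iff, Set.mem_singleton_iff]; tauto
  rcases h with ⟨p, q, r, h1, h2, h3, ht⟩ | ⟨v, hI, hs⟩ | ⟨v, hn, hs⟩ | ⟨v, k, hk, hs⟩
  · exact Or.inl ⟨p, r, q, h1, h3, h2, tri_swap ht⟩
  · exact Or.inr (Or.inl ⟨v, hI, hset ▸ hs⟩)
  · exact Or.inr (Or.inr (Or.inl ⟨v, hn, hset ▸ hs⟩))
  · exact Or.inr (Or.inr (Or.inr ⟨v, k, hk, hset ▸ hs⟩))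

lemma TClass_swap12 {a b c : Wt V} (h : TClass G b a c) : TClass G a b c := by
  have hset : ({b, a, c} : Set (Wt V)) = {a, b, c} := by
    ext t; simp only [Set.mem_insert_iff, Set.mem_singleton_iff]; tauto
  rcases h with ⟨p, q, r, h1, h2, h3, ht⟩ | ⟨v, hI, hs⟩ | ⟨v, hn, hs⟩ | ⟨v, k, hk, hs⟩
  · exact Or.inl ⟨q, p, r, h2, h1, h3, ht.1.symm, ht.2.2, ht.2.1⟩
  · exact Or.inr (Or.inl ⟨v, hI, hset ▸ hs⟩)
  · exact Or.inr (Or.inr (Or.inl ⟨v, hn, hset ▸ hs⟩))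
  · exact Or.inr (Or.inr (Or.inr ⟨v, k, hk, hset ▸ hs⟩))

/-- Any triangle of the extended graph is classified. -/
lemma tri_class {a b c : Wt V} (hab : (Gp G).Adj a b) (hac : (Gp G).Adj a c)
    (hbc : (Gp G).Adj b c) : TClass G a b c := by
  rcases a with u | ⟨v, i⟩ <;> rcases b with u' | ⟨v', i'⟩ <;> rcases c with u'' | ⟨v'', i''⟩
  · exact Or.inl ⟨u, u', u'', rfl, rfl, rfl, adj_ll.mp hab, adj_ll.mp hac, adj_ll.mp hbc⟩
  · exact aux_llr hab hac hbc
  · exact TClass_swap23 (aux_llr hac hab hbc.symm)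
  · exact aux_lrr hab hac hbc
  · exact TClass_swap12 (TClass_swap23 (aux_llr hbc hab.symm hac.symm))
  · exact TClass_swap12 (aux_lrr hab.symm hbc hac)
  · exact TClass_swap23 (TClass_swap12 (aux_lrr hac.symm hbc.symm hab))
  · exact aux_rrr hab hac hbc

lemma mem3_1 {α : Type*} {a b c x y z : α} (h : ({a, b, c} : Set α) = {x, y, z}) :
    a = x ∨ a = y ∨ a = z := by
  have : a ∈ ({x, y, z} : Set α) := h ▸ (by simp)
  simpa using this

lemma mem3_2 {α : Type*} {a b c x y z : α} (h : ({a, b, c} : Set α) = {x, y, z}) :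
    b = x ∨ b = y ∨ b = z := by
  have : b ∈ ({x, y, z} : Set α) := h ▸ (by simp)
  simpa using this

lemma mem3_r1 {α : Type*} {a b c x y z : α} (h : ({a, b, c} : Set α) = {x, y, z}) :
    x = a ∨ x = b ∨ x = c := by
  have : x ∈ ({a, b, c} : Set α) := h.symm ▸ (by simp)
  simpa using this

lemma mem3_r2 {α : Type*} {a b c x y z : α} (h : ({a, b, c} : Set α) = {x, y, z}) :
    y = a ∨ y = b ∨ y = c := by
  have : y ∈ ({a, b, c} : Set α) := h.symm ▸ (by simp)
  simpa using this

lemma mem3_r3 {α : Type*} {a b c x y z : α} (h : ({a, b, c} : Set α) = {x, y, z}) :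
    z = a ∨ z = b ∨ z = c := by
  have : z ∈ ({a, b, c} : Set α) := h.symm ▸ (by simp)
  simpa using this

/-- If `u` is in the triangle set of an isolated vertex, it is in a triangle. -/
lemma tri_of_mem_tset (hbf : ¬ HasBowtie G) {v u : V} (hI : Iso G v) (hu : u ∈ tset G v) :
    ∃ x y, Tri G u x y := by
  obtain ⟨⟨x, y, ht⟩, hc2⟩ := hI
  rw [tset_eq hbf hc2 ht] at hu
  rcases hu with rfl | rfl | rfl
  · exact ⟨x, y, ht⟩
  · exact ⟨v, y, ht.1.symm, ht.2.2, ht.2.1⟩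
  · exact ⟨v, x, ht.2.1.symm, ht.2.2.symm, ht.1⟩

/-- The partner of an `epair` component inside a triangle through that component. -/
lemma epair_partner (hbf : ¬ HasBowtie G) {v p q r : V} (hI : Iso G v) (ht : Tri G p q r)
    (hp : p = (epair G v).1 ∨ p = (epair G v).2) :
    ∃ z, z ≠ p ∧ (z = (epair G v).1 ∨ z = (epair G v).2) ∧ (z = q ∨ z = r) := by
  obtain ⟨he1, he2, hee⟩ := epair_spec hI
  have hpmem : p ∈ tset G v := by rcases hp with rfl | rfl; exact he1; exact he2
  have hset := L2c hbf hI hpmem ht.1 ht.2.1 ht.2.2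
  rcases hp with rfl | rfl
  · refine ⟨(epair G v).2, hee.ne.symm, Or.inr rfl, ?_⟩
    have : (epair G v).2 ∈ ({(epair G v).1, q, r} : Set V) := hset.symm ▸ he2
    rcases this with h | h | h
    · exact absurd h hee.ne.symm
    · exact Or.inl h
    · exact Or.inr h
  · refine ⟨(epair G v).1, hee.ne, Or.inl rfl, ?_⟩
    have : (epair G v).1 ∈ ({(epair G v).2, q, r} : Set V) := hset.symm ▸ he1
    rcases this with h | h | h
    · exact absurd h hee.ne
    · exact Or.inl h
    · exact Or.inr h



theorem gp_bowtie_free (hbf : ¬ HasBowtie G) : ¬ HasBowtie (Gp G) := by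
  rintro ⟨a, b, c, d, e, hab', hac', had', hae', hbc', hbd', hbe', hcd', hce', hde',
    Hab, Hac, Hbc, Had, Hae, Hde⟩
  have T1 := tri_class Hab Hac Hbc
  have T2 := tri_class Had Hae Hde
  -- two common vertices in the two triangles give a contradiction
  have two_common : ∀ x y : Wt V, x ≠ y → (x = a ∨ x = b ∨ x = c) → (x = a ∨ x = d ∨ x = e) →
      (y = a ∨ y = b ∨ y = c) → (y = a ∨ y = d ∨ y = e) → False := by
    intro x y hxy hx1 hx2 hy1 hy2
    have hx : x = a := by
      rcases hx1 with rfl | rfl | rfl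
      · rfl
      · rcases hx2 with h | h | h
        · exact (hab' h.symm).elim
        · exact (hbd' h).elim
        · exact (hbe' h).elim
      · rcases hx2 with h | h | h
        · exact (hac' h.symm).elim
        · exact (hcd' h).elim
        · exact (hce' h).elim
    have hy : y = a := by
      rcases hy1 with rfl | rfl | rfl
      · rfl
      · rcases hy2 with h | h | h
        · exact (hab' h.symm).elim
        · exact (hbd' h).elim
        · exact (hbe' h).elim
      · rcases hy2 with h | h | h
        · exact (hac' h.symm).elim
        · exact (hcd' h).elim
        · exact (hce' h).elim
    exact hxy (hx.trans hy.symm)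
  -- helper: an old vertex of a C1-triangle lying in an epair forces a second common vertex
  have epair_case : ∀ (v : V) (p q r : V), Iso G v → Tri G p q r →
      (p = (epair G v).1 ∨ p = (epair G v).2) →
      a = inl p →
      ((inl (epair G v).1 : Wt V) = a ∨ inl (epair G v).1 = d ∨ inl (epair G v).1 = e) →
      ((inl (epair G v).2 : Wt V) = a ∨ inl (epair G v).2 = d ∨ inl (epair G v).2 = e) →
      (b = inl q) → (c = inl r) → False := by
    intro v p q r hI ht hp ha h1 h2 hb hc
    obtain ⟨z, hzp, hz12, hzqr⟩ := epair_partner hbf hI ht hp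
    have hzde : (inl z : Wt V) = d ∨ inl z = e := by
      have hza : (inl z : Wt V) ≠ a := by
        rw [ha]; intro h; exact hzp (Sum.inl.inj h)
      rcases hz12 with rfl | rfl
      · rcases h1 with h | h | h
        · exact absurd h hza
        · exact Or.inl h
        · exact Or.inr h
      · rcases h2 with h | h | h
        · exact absurd h hza
        · exact Or.inl h
        · exact Or.inr h
    have hzbc : (inl z : Wt V) = b ∨ inl z = c := by
      rcases hzqr with rfl | rfl
      · exact Or.inl hb.symm
      · exact Or.inr hc.symm
    rcases hzbc with h | h <;> rcases hzde with h' | h'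
    · exact hbd' (h.symm.trans h')
    · exact hbe' (h.symm.trans h')
    · exact hcd' (h.symm.trans h')
    · exact hce' (h.symm.trans h')
  have epair_case2 : ∀ (v : V) (p q r : V), Iso G v → Tri G p q r →
      (p = (epair G v).1 ∨ p = (epair G v).2) →
      a = inl p →
      ((inl (epair G v).1 : Wt V) = a ∨ inl (epair G v).1 = b ∨ inl (epair G v).1 = c) →
      ((inl (epair G v).2 : Wt V) = a ∨ inl (epair G v).2 = b ∨ inl (epair G v).2 = c) →
      (d = inl q) → (e = inl r) → False := by
    intro v p q r hI ht hp ha h1 h2 hd he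
    obtain ⟨z, hzp, hz12, hzqr⟩ := epair_partner hbf hI ht hp
    have hzbc : (inl z : Wt V) = b ∨ inl z = c := by
      have hza : (inl z : Wt V) ≠ a := by
        rw [ha]; intro h; exact hzp (Sum.inl.inj h)
      rcases hz12 with rfl | rfl
      · rcases h1 with h | h | h
        · exact absurd h hza
        · exact Or.inl h
        · exact Or.inr h
      · rcases h2 with h | h | h
        · exact absurd h hza
        · exact Or.inl h
        · exact Or.inr h
    have hzde : (inl z : Wt V) = d ∨ inl z = e := by
      rcases hzqr with rfl | rfl
      · exact Or.inl hd.symm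
      · exact Or.inr he.symm
    rcases hzbc with h | h <;> rcases hzde with h' | h'
    · exact hbd' (h.symm.trans h')
    · exact hbe' (h.symm.trans h')
    · exact hcd' (h.symm.trans h')
    · exact hce' (h.symm.trans h')
  have seteq_contra : ({a, b, c} : Set (Wt V)) = {a, d, e} → False := by
    intro h
    rcases mem3_2 h with h' | h' | h'
    · exact hab' h'.symm
    · exact hbd' h'
    · exact hbe' h'
  rcases T1 with ⟨pp, qq, rr, hA, hB, hC, ht1⟩ | ⟨v, hI, hs1⟩ | ⟨v, hn, hs1⟩ | ⟨v, k, hk, hs1⟩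
  · subst hA; subst hB; subst hC
    rcases T2 with ⟨p', d', e', hpp', hD, hE, ht2⟩ | ⟨v', hI', hs2⟩ | ⟨v', hn', hs2⟩ |
      ⟨v', k', hk', hs2⟩
    -- (C1, C1)
    · subst hD; subst hE
      have hps : p' = pp := (Sum.inl.inj hpp').symm
      rw [hps] at ht2
      refine hbf ⟨pp, qq, rr, d', e', ?_, ?_, ?_, ?_, ?_, ?_, ?_, ?_, ?_, ?_,
        ht1.1, ht1.2.1, ht1.2.2, ht2.1, ht2.2.1, ht2.2.2⟩ <;> intro h
      · exact hab' (congrArg inl h)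
      · exact hac' (congrArg inl h)
      · exact had' (congrArg inl h)
      · exact hae' (congrArg inl h)
      · exact hbc' (congrArg inl h)
      · exact hbd' (congrArg inl h)
      · exact hbe' (congrArg inl h)
      · exact hcd' (congrArg inl h)
      · exact hce' (congrArg inl h)
      · exact hde' (congrArg inl h)
    -- (C1, C2)
    · rcases mem3_1 hs2 with ha | ha | ha
      · exact epair_case v' pp qq rr hI' ht1 (Or.inl (Sum.inl.inj ha)) rfl
          (mem3_r1 hs2) (mem3_r2 hs2) rfl rfl
      · exact epair_case v' pp qq rr hI' ht1 (Or.inr (Sum.inl.inj ha)) rfl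
          (mem3_r1 hs2) (mem3_r2 hs2) rfl rfl
      · exact (Sum.inl_ne_inr ha).elim
    -- (C1, C3)
    · rcases mem3_1 hs2 with ha | ha | ha
      · exact hn' qq rr ((Sum.inl.inj ha) ▸ ht1)
      · exact (Sum.inl_ne_inr ha).elim
      · exact (Sum.inl_ne_inr ha).elim
    -- (C1, C4)
    · rcases mem3_1 hs2 with ha | ha | ha <;> exact (Sum.inl_ne_inr ha).elim
  · rcases T2 with ⟨p', d', e', hD, hE, hF, ht2⟩ | ⟨v', hI', hs2⟩ | ⟨v', hn', hs2⟩ |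
      ⟨v', k', hk', hs2⟩
    -- (C2, C1)
    subst hD; subst hE; subst hF
    · rcases mem3_1 hs1 with ha | ha | ha
      · exact epair_case2 v p' d' e' hI ht2 (Or.inl (Sum.inl.inj ha)) rfl
          (mem3_r1 hs1) (mem3_r2 hs1) rfl rfl
      · exact epair_case2 v p' d' e' hI ht2 (Or.inr (Sum.inl.inj ha)) rfl
          (mem3_r1 hs1) (mem3_r2 hs1) rfl rfl
      · exact (Sum.inl_ne_inr ha).elim
    -- (C2, C2)
    · have c22 : ∀ u : V, u ∈ tset G v → u ∈ tset G v' → False := by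
        intro u hu hu'
        have hts := L3 hbf hI hI' hu hu'
        have hep := epair_congr hts hI
        obtain ⟨-, -, hee⟩ := epair_spec hI
        refine two_common (inl (epair G v).1) (inl (epair G v).2)
          (fun h => hee.ne (Sum.inl.inj h)) (mem3_r1 hs1) ?_ (mem3_r2 hs1) ?_
        · rw [hep]; exact mem3_r1 hs2
        · rw [hep]; exact mem3_r2 hs2
      obtain ⟨he1, he2, -⟩ := epair_spec hI
      obtain ⟨he1', he2', -⟩ := epair_spec hI'
      rcases mem3_1 hs1 with ha1 | ha1 | ha1 <;> rcases mem3_1 hs2 with ha2 | ha2 | ha2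
      · have h := Sum.inl.inj (ha1.symm.trans ha2)
        rw [← h] at he1'; exact c22 _ he1 he1'
      · have h := Sum.inl.inj (ha1.symm.trans ha2)
        rw [← h] at he2'; exact c22 _ he1 he2'
      · exact (Sum.inl_ne_inr (ha1.symm.trans ha2)).elim
      · have h := Sum.inl.inj (ha1.symm.trans ha2)
        rw [← h] at he1'; exact c22 _ he2 he1'
      · have h := Sum.inl.inj (ha1.symm.trans ha2)
        rw [← h] at he2'; exact c22 _ he2 he2'
      · exact (Sum.inl_ne_inr (ha1.symm.trans ha2)).elim
      · exact (Sum.inl_ne_inr (ha2.symm.trans ha1)).elim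
      · exact (Sum.inl_ne_inr (ha2.symm.trans ha1)).elim
      · -- a = inr (v,4) = inr (v',4)
        have h := Sum.inr.inj (ha1.symm.trans ha2)
        have hvv : v = v' := congrArg Prod.fst h
        subst hvv
        have seteq : ({a, b, c} : Set (Wt V)) = {a, d, e} := hs1.trans hs2.symm
        rcases mem3_2 seteq with h' | h' | h'
        · exact hab' h'.symm
        · exact hbd' h'
        · exact hbe' h'
    -- (C2, C3)
    · rcases mem3_1 hs1 with ha1 | ha1 | ha1 <;> rcases mem3_1 hs2 with ha2 | ha2 | ha2
      · have h := Sum.inl.inj (ha1.symm.trans ha2)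
        have hmem := (epair_spec hI).1
        rw [h] at hmem
        obtain ⟨x, y, ht⟩ := tri_of_mem_tset hbf hI hmem
        exact hn' x y ht
      · exact (Sum.inl_ne_inr (ha1.symm.trans ha2)).elim
      · exact (Sum.inl_ne_inr (ha1.symm.trans ha2)).elim
      · have h := Sum.inl.inj (ha1.symm.trans ha2)
        have hmem := (epair_spec hI).2.1
        rw [h] at hmem
        obtain ⟨x, y, ht⟩ := tri_of_mem_tset hbf hI hmem
        exact hn' x y ht
      · exact (Sum.inl_ne_inr (ha1.symm.trans ha2)).elim
      · exact (Sum.inl_ne_inr (ha1.symm.trans ha2)).elim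
      · exact (Sum.inl_ne_inr (ha2.symm.trans ha1)).elim
      · exact absurd (show (4 : Fin 5) = 0 from
          congrArg Prod.snd (Sum.inr.inj (ha1.symm.trans ha2))) (by decide)
      · exact absurd (show (4 : Fin 5) = 1 from
          congrArg Prod.snd (Sum.inr.inj (ha1.symm.trans ha2))) (by decide)
    -- (C2, C4)
    · rcases mem3_1 hs1 with ha1 | ha1 | ha1 <;> rcases mem3_1 hs2 with ha2 | ha2 | ha2
      · exact (Sum.inl_ne_inr (ha1.symm.trans ha2)).elim
      · exact (Sum.inl_ne_inr (ha1.symm.trans ha2)).elim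
      · exact (Sum.inl_ne_inr (ha1.symm.trans ha2)).elim
      · exact (Sum.inl_ne_inr (ha1.symm.trans ha2)).elim
      · exact (Sum.inl_ne_inr (ha1.symm.trans ha2)).elim
      · exact (Sum.inl_ne_inr (ha1.symm.trans ha2)).elim
      · exact absurd (show (4 : Fin 5) = 0 from
          congrArg Prod.snd (Sum.inr.inj (ha1.symm.trans ha2))) (by decide)
      · exact absurd (show (4 : Fin 5) = 1 from
          congrArg Prod.snd (Sum.inr.inj (ha1.symm.trans ha2))) (by decide)
      · have h := Sum.inr.inj (ha1.symm.trans ha2)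
        have hvv : v = v' := congrArg Prod.fst h
        have h4 : (4 : Fin 5) = k' := congrArg Prod.snd h
        rcases hk' with hk' | hk' | ⟨hk', hnI⟩
        · rw [hk'] at h4; exact absurd h4 (by decide)
        · rw [hk'] at h4; exact absurd h4 (by decide)
        · exact hnI (hvv ▸ hI)
  · rcases T2 with ⟨p', d', e', hD, hE, hF, ht2⟩ | ⟨v', hI', hs2⟩ | ⟨v', hn', hs2⟩ |
      ⟨v', k', hk', hs2⟩
    -- (C3, C1)
    subst hD; subst hE; subst hF
    · rcases mem3_1 hs1 with ha | ha | ha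
      · exact hn d' e' ((Sum.inl.inj ha) ▸ ht2)
      · exact (Sum.inl_ne_inr ha).elim
      · exact (Sum.inl_ne_inr ha).elim
    -- (C3, C2)
    · rcases mem3_1 hs1 with ha1 | ha1 | ha1 <;> rcases mem3_1 hs2 with ha2 | ha2 | ha2
      · have h := Sum.inl.inj (ha2.symm.trans ha1)
        have hmem := (epair_spec hI').1
        rw [h] at hmem
        obtain ⟨x, y, ht⟩ := tri_of_mem_tset hbf hI' hmem
        exact hn x y ht
      · have h := Sum.inl.inj (ha2.symm.trans ha1)
        have hmem := (epair_spec hI').2.1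
        rw [h] at hmem
        obtain ⟨x, y, ht⟩ := tri_of_mem_tset hbf hI' hmem
        exact hn x y ht
      · exact (Sum.inl_ne_inr (ha2.symm.trans ha1).symm).elim
      · exact (Sum.inl_ne_inr (ha2.symm.trans ha1)).elim
      · exact (Sum.inl_ne_inr (ha2.symm.trans ha1)).elim
      · exact absurd (show (4 : Fin 5) = 0 from
          congrArg Prod.snd (Sum.inr.inj (ha2.symm.trans ha1))) (by decide)
      · exact (Sum.inl_ne_inr (ha2.symm.trans ha1)).elim
      · exact (Sum.inl_ne_inr (ha2.symm.trans ha1)).elim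
      · exact absurd (show (4 : Fin 5) = 1 from
          congrArg Prod.snd (Sum.inr.inj (ha2.symm.trans ha1))) (by decide)
    -- (C3, C3)
    · rcases mem3_1 hs1 with ha1 | ha1 | ha1 <;> rcases mem3_1 hs2 with ha2 | ha2 | ha2
      · have hvv : v = v' := Sum.inl.inj (ha1.symm.trans ha2)
        subst hvv
        exact seteq_contra (hs1.trans hs2.symm)
      · exact (Sum.inl_ne_inr (ha1.symm.trans ha2)).elim
      · exact (Sum.inl_ne_inr (ha1.symm.trans ha2)).elim
      · exact (Sum.inl_ne_inr (ha2.symm.trans ha1)).elim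
      · have hvv : v = v' := congrArg Prod.fst (Sum.inr.inj (ha1.symm.trans ha2))
        subst hvv
        exact seteq_contra (hs1.trans hs2.symm)
      · have hvv : v = v' := congrArg Prod.fst (Sum.inr.inj (ha1.symm.trans ha2))
        subst hvv
        exact seteq_contra (hs1.trans hs2.symm)
      · exact (Sum.inl_ne_inr (ha2.symm.trans ha1)).elim
      · have hvv : v = v' := congrArg Prod.fst (Sum.inr.inj (ha1.symm.trans ha2))
        subst hvv
        exact seteq_contra (hs1.trans hs2.symm)
      · have hvv : v = v' := congrArg Prod.fst (Sum.inr.inj (ha1.symm.trans ha2))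
        subst hvv
        exact seteq_contra (hs1.trans hs2.symm)
    -- (C3, C4)
    · rcases mem3_1 hs1 with ha1 | ha1 | ha1 <;> rcases mem3_1 hs2 with ha2 | ha2 | ha2 <;>
      [ exact (Sum.inl_ne_inr (ha1.symm.trans ha2)).elim;
        exact (Sum.inl_ne_inr (ha1.symm.trans ha2)).elim;
        exact (Sum.inl_ne_inr (ha1.symm.trans ha2)).elim;
        skip; skip; skip; skip; skip; skip] <;>
      · have hvv : v = v' := congrArg Prod.fst (Sum.inr.inj (ha1.symm.trans ha2))
        subst hvv
        exact two_common (inr (v, 0)) (inr (v, 1)) (by simp) (mem3_r2 hs1) (mem3_r1 hs2)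
          (mem3_r3 hs1) (mem3_r2 hs2)
  · rcases T2 with ⟨p', d', e', hD, hE, hF, ht2⟩ | ⟨v', hI', hs2⟩ | ⟨v', hn', hs2⟩ |
      ⟨v', k', hk', hs2⟩
    -- (C4, C1)
    subst hD; subst hE; subst hF
    · rcases mem3_1 hs1 with ha | ha | ha <;> exact (Sum.inl_ne_inr ha).elim
    -- (C4, C2)
    · rcases mem3_1 hs1 with ha1 | ha1 | ha1 <;> rcases mem3_1 hs2 with ha2 | ha2 | ha2
      · exact (Sum.inl_ne_inr (ha2.symm.trans ha1)).elim
      · exact (Sum.inl_ne_inr (ha2.symm.trans ha1)).elim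
      · exact absurd (show (4 : Fin 5) = 0 from
          congrArg Prod.snd (Sum.inr.inj (ha2.symm.trans ha1))) (by decide)
      · exact (Sum.inl_ne_inr (ha2.symm.trans ha1)).elim
      · exact (Sum.inl_ne_inr (ha2.symm.trans ha1)).elim
      · exact absurd (show (4 : Fin 5) = 1 from
          congrArg Prod.snd (Sum.inr.inj (ha2.symm.trans ha1))) (by decide)
      · exact (Sum.inl_ne_inr (ha2.symm.trans ha1)).elim
      · exact (Sum.inl_ne_inr (ha2.symm.trans ha1)).elim
      · have h := Sum.inr.inj (ha2.symm.trans ha1)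
        have hvv : v' = v := congrArg Prod.fst h
        have h4 : (4 : Fin 5) = k := congrArg Prod.snd h
        rcases hk with hk | hk | ⟨hk, hnI⟩
        · rw [hk] at h4; exact absurd h4 (by decide)
        · rw [hk] at h4; exact absurd h4 (by decide)
        · exact hnI (hvv ▸ hI')
    -- (C4, C3)
    · rcases mem3_1 hs1 with ha1 | ha1 | ha1 <;> rcases mem3_1 hs2 with ha2 | ha2 | ha2 <;>
      [ exact (Sum.inl_ne_inr (ha2.symm.trans ha1)).elim;
        skip; skip;
        exact (Sum.inl_ne_inr (ha2.symm.trans ha1)).elim;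
        skip; skip;
        exact (Sum.inl_ne_inr (ha2.symm.trans ha1)).elim;
        skip; skip] <;>
      · have hvv : v = v' := congrArg Prod.fst (Sum.inr.inj (ha1.symm.trans ha2))
        subst hvv
        exact two_common (inr (v, 0)) (inr (v, 1)) (by simp) (mem3_r1 hs1) (mem3_r2 hs2)
          (mem3_r2 hs1) (mem3_r3 hs2)
    -- (C4, C4)
    · rcases mem3_1 hs1 with ha1 | ha1 | ha1 <;> rcases mem3_1 hs2 with ha2 | ha2 | ha2 <;>
      · have hvv : v = v' := congrArg Prod.fst (Sum.inr.inj (ha1.symm.trans ha2))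
        subst hvv
        exact two_common (inr (v, 0)) (inr (v, 1)) (by simp) (mem3_r1 hs1) (mem3_r1 hs2)
          (mem3_r2 hs1) (mem3_r2 hs2)



/-- Generic construction of a 2-chimney copy through a vertex. -/
lemma chimney2_copy {W : Type*} (G' : SimpleGraph W) {a b c d w : W} (hcd : c ≠ d)
    (hab : G'.Adj a b) (hca : G'.Adj c a) (hcb : G'.Adj c b)
    (hda : G'.Adj d a) (hdb : G'.Adj d b)
    (hw : w = a ∨ w = b ∨ w = c ∨ w = d) : ∃ n, 2 ≤ n ∧ InCopy (chimney n) G' w := by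
  refine ⟨2, le_refl 2, ?_⟩
  set f : Fin 2 ⊕ Fin 2 → W :=
    Sum.elim (fun i => if i.val = 0 then a else b) (fun i => if i.val = 0 then c else d) with hf
  have e0 : f (inl 0) = a := rfl
  have e1 : f (inl 1) = b := rfl
  have e2 : f (inr 0) = c := rfl
  have e3 : f (inr 1) = d := rfl
  have h1 : a ≠ b := hab.ne
  have h2 : c ≠ a := hca.ne
  have h3 : c ≠ b := hcb.ne
  have h4 : d ≠ a := hda.ne
  have h5 : d ≠ b := hdb.ne
  have hinj : Function.Injective f := by
    rintro (i | i) (j | j) h <;> fin_cases i <;> fin_cases j <;>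
      simp_all [e0, e1, e2, e3]
  refine ⟨⟨f, hinj⟩, ?_, ?_⟩
  · have hfin : ∀ i : Fin 2, i = 0 ∨ i = 1 := by decide
    rintro (i | i) (j | j) ⟨hne, hL⟩ <;> rcases hfin i with rfl | rfl <;>
      rcases hfin j with rfl | rfl <;>
      simp only [Function.Embedding.coeFn_mk, e0, e1, e2, e3] <;>
      first
      | exact (hne rfl).elim
      | exact hab
      | exact hab.symm
      | exact hca
      | exact hca.symm
      | exact hcb
      | exact hcb.symm
      | exact hda
      | exact hda.symm
      | exact hdb
      | exact hdb.symm
      | exact absurd hL (by simp)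
  · rcases hw with rfl | rfl | rfl | rfl
    · exact ⟨inl 0, e0⟩
    · exact ⟨inl 1, e1⟩
    · exact ⟨inr 0, e2⟩
    · exact ⟨inr 1, e3⟩

lemma adj_mem3 {v x y : V} (ht : Tri G v x y) :
    ∀ a ∈ ({v, x, y} : Set V), ∀ b ∈ ({v, x, y} : Set V), a ≠ b → G.Adj a b := by
  rintro a (rfl | rfl | rfl) b (rfl | rfl | rfl) hne <;>
    first
    | exact (hne rfl).elim
    | exact ht.1
    | exact ht.1.symm
    | exact ht.2.1
    | exact ht.2.1.symm
    | exact ht.2.2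
    | exact ht.2.2.symm

lemma three_distinct {v x y e1 e2 : V} (hvx : v ≠ x) (hvy : v ≠ y) (hxy : x ≠ y)
    (he1 : e1 ∈ ({v, x, y} : Set V)) (he2 : e2 ∈ ({v, x, y} : Set V)) (hne : e1 ≠ e2) :
    ∃ t, t ∈ ({v, x, y} : Set V) ∧ t ≠ e1 ∧ t ≠ e2 ∧ (v = t ∨ v = e1 ∨ v = e2) := by
  rcases he1 with rfl | rfl | rfl <;> rcases he2 with rfl | rfl | rfl
  · exact (hne rfl).elim
  · exact ⟨y, by simp, Ne.symm hvy, Ne.symm hxy, by simp⟩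
  · exact ⟨x, by simp, Ne.symm hvx, hxy, by simp⟩
  · exact ⟨y, by simp, Ne.symm hxy, Ne.symm hvy, by simp⟩
  · exact (hne rfl).elim
  · exact ⟨v, by simp, hvx, hvy, by simp⟩
  · exact ⟨x, by simp, hxy, Ne.symm hvx, by simp⟩
  · exact ⟨v, by simp, hvy, hvx, by simp⟩
  · exact (hne rfl).elim



theorem gp_good (hbf : ¬ HasBowtie G) : GoodGraph (Gp G) := by
  intro w
  left
  rcases w with u | ⟨v, i⟩
  · by_cases htri : ∃ x y, Tri G u x y
    · by_cases hc2 : InC2 G u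
      · obtain ⟨a₀, b₀, c₀, d₀, hcd, h1, h2, h3, h4, h5, hmem⟩ := hc2
        refine chimney2_copy (Gp G) (a := inl a₀) (b := inl b₀) (c := inl c₀) (d := inl d₀)
          (fun h => hcd (Sum.inl.inj h)) (adj_ll.mpr h1) (adj_ll.mpr h2) (adj_ll.mpr h3)
          (adj_ll.mpr h4) (adj_ll.mpr h5) ?_
        rcases hmem with rfl | rfl | rfl | rfl
        · exact Or.inl rfl
        · exact Or.inr (Or.inl rfl)
        · exact Or.inr (Or.inr (Or.inl rfl))
        · exact Or.inr (Or.inr (Or.inr rfl))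
      · have hI : Iso G u := ⟨htri, hc2⟩
        obtain ⟨x, y, ht⟩ := htri
        obtain ⟨he1, he2, hee⟩ := epair_spec hI
        have hts := tset_eq hbf hc2 ht
        rw [hts] at he1 he2
        obtain ⟨t, htmem, hte1, hte2, humem⟩ :=
          three_distinct ht.1.ne ht.2.1.ne ht.2.2.ne he1 he2 hee.ne
        have hadj := adj_mem3 ht
        refine chimney2_copy (Gp G) (a := inl (epair G u).1) (b := inl (epair G u).2)
          (c := inl t) (d := inr (u, 4)) (by simp)
          (adj_ll.mpr hee) (adj_ll.mpr (hadj t htmem _ he1 hte1))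
          (adj_ll.mpr (hadj t htmem _ he2 hte2))
          (adj_rl.mpr (Or.inr ⟨hI, rfl, Or.inl rfl⟩))
          (adj_rl.mpr (Or.inr ⟨hI, rfl, Or.inr rfl⟩)) ?_
        rcases humem with h | h | h
        · exact Or.inr (Or.inr (Or.inl (congrArg inl h)))
        · exact Or.inl (congrArg inl h)
        · exact Or.inr (Or.inl (congrArg inl h))
    · have hn : NoTri G u := fun x y ht => htri ⟨x, y, ht⟩
      refine chimney2_copy (Gp G) (a := inr (u, 0)) (b := inr (u, 1)) (c := inl u)
        (d := inr (u, (2 : Fin 5))) (by simp)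
        (adj_rr.mpr ⟨rfl, by decide, Or.inl (by decide), fun _ => ⟨by decide, by decide⟩⟩)
        (adj_lr.mpr (Or.inl ⟨hn, rfl, by decide⟩))
        (adj_lr.mpr (Or.inl ⟨hn, rfl, by decide⟩))
        (adj_rr.mpr ⟨rfl, by decide, Or.inr (by decide), fun _ => ⟨by decide, by decide⟩⟩)
        (adj_rr.mpr ⟨rfl, by decide, Or.inr (by decide), fun _ => ⟨by decide, by decide⟩⟩)
        (Or.inr (Or.inr (Or.inl rfl)))
  · by_cases h4 : i = 4
    · subst h4
      by_cases hI : Iso G v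
      · have hI' := hI
        obtain ⟨⟨x, y, ht⟩, hc2⟩ := hI'
        obtain ⟨he1, he2, hee⟩ := epair_spec hI
        have hts := tset_eq hbf hc2 ht
        rw [hts] at he1 he2
        obtain ⟨t, htmem, hte1, hte2, humem⟩ :=
          three_distinct ht.1.ne ht.2.1.ne ht.2.2.ne he1 he2 hee.ne
        have hadj := adj_mem3 ht
        refine chimney2_copy (Gp G) (a := inl (epair G v).1) (b := inl (epair G v).2)
          (c := inl t) (d := inr (v, 4)) (by simp)
          (adj_ll.mpr hee) (adj_ll.mpr (hadj t htmem _ he1 hte1))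
          (adj_ll.mpr (hadj t htmem _ he2 hte2))
          (adj_rl.mpr (Or.inr ⟨hI, rfl, Or.inl rfl⟩))
          (adj_rl.mpr (Or.inr ⟨hI, rfl, Or.inr rfl⟩))
          (Or.inr (Or.inr (Or.inr rfl)))
      · refine chimney2_copy (Gp G) (a := inr (v, 0)) (b := inr (v, 1))
          (c := inr (v, (2 : Fin 5))) (d := inr (v, (4 : Fin 5)))
          (fun h => absurd (show (2 : Fin 5) = 4 from congrArg Prod.snd (Sum.inr.inj h))
            (by decide))
          (adj_rr.mpr ⟨rfl, by decide, Or.inl (by decide), fun _ => ⟨by decide, by decide⟩⟩)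
          (adj_rr.mpr ⟨rfl, by decide, Or.inr (by decide), fun _ => ⟨by decide, by decide⟩⟩)
          (adj_rr.mpr ⟨rfl, by decide, Or.inr (by decide), fun _ => ⟨by decide, by decide⟩⟩)
          (adj_rr.mpr ⟨rfl, by decide, Or.inr (by decide), fun h => absurd h hI⟩)
          (adj_rr.mpr ⟨rfl, by decide, Or.inr (by decide), fun h => absurd h hI⟩)
          (Or.inr (Or.inr (Or.inr rfl)))
    · have hi : i = 0 ∨ i = 1 ∨ i = 2 ∨ i = 3 := by
        have h5 := i.isLt
        have hne : i.val ≠ 4 := fun h => h4 (Fin.ext h)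
        simp only [Fin.ext_iff]; omega
      refine chimney2_copy (Gp G) (a := inr (v, 0)) (b := inr (v, 1))
        (c := inr (v, (2 : Fin 5))) (d := inr (v, (3 : Fin 5)))
        (fun h => absurd (show (2 : Fin 5) = 3 from congrArg Prod.snd (Sum.inr.inj h))
          (by decide))
        (adj_rr.mpr ⟨rfl, by decide, Or.inl (by decide), fun _ => ⟨by decide, by decide⟩⟩)
        (adj_rr.mpr ⟨rfl, by decide, Or.inr (by decide), fun _ => ⟨by decide, by decide⟩⟩)
        (adj_rr.mpr ⟨rfl, by decide, Or.inr (by decide), fun _ => ⟨by decide, by decide⟩⟩)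
        (adj_rr.mpr ⟨rfl, by decide, Or.inr (by decide), fun _ => ⟨by decide, by decide⟩⟩)
        (adj_rr.mpr ⟨rfl, by decide, Or.inr (by decide), fun _ => ⟨by decide, by decide⟩⟩)
        ?_
      rcases hi with rfl | rfl | rfl | rfl
      · exact Or.inl rfl
      · exact Or.inr (Or.inl rfl)
      · exact Or.inr (Or.inr (Or.inl rfl))
      · exact Or.inr (Or.inr (Or.inr rfl))


end BT

/-- Every finite bowtie-free graph is a (not necessarily induced) subgraph of a
finite good bowtie-free graph. -/
theorem bowtieFree_subgraph_of_good {V : Type*} [Fintype V] (G : SimpleGraph V)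
    (hbf : ¬ HasBowtie G) :
    ∃ (W : Type) (_ : Fintype W) (G' : SimpleGraph W) (f : V ↪ W),
      ¬ HasBowtie G' ∧ GoodGraph G' ∧ ∀ u v : V, G.Adj u v → G'.Adj (f u) (f v) := by
  classical
  obtain ⟨n, ⟨eqv⟩⟩ : ∃ n, Nonempty (V ≃ Fin n) := ⟨Fintype.card V, ⟨Fintype.equivFin V⟩⟩
  let G0 : SimpleGraph (Fin n) :=
    { Adj := fun i j => G.Adj (eqv.symm i) (eqv.symm j)
      symm := ⟨fun i j h => h.symm⟩
      loopless := ⟨fun i h => G.irrefl h⟩ }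
  have hbf0 : ¬ HasBowtie G0 := by
    rintro ⟨a, b, c, d, e, h1, h2, h3, h4, h5, h6, h7, h8, h9, h10, A1, A2, A3, A4, A5, A6⟩
    refine hbf ⟨eqv.symm a, eqv.symm b, eqv.symm c, eqv.symm d, eqv.symm e, ?_, ?_, ?_, ?_,
      ?_, ?_, ?_, ?_, ?_, ?_, A1, A2, A3, A4, A5, A6⟩ <;> intro h
    · exact h1 (eqv.symm.injective h)
    · exact h2 (eqv.symm.injective h)
    · exact h3 (eqv.symm.injective h)
    · exact h4 (eqv.symm.injective h)
    · exact h5 (eqv.symm.injective h)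
    · exact h6 (eqv.symm.injective h)
    · exact h7 (eqv.symm.injective h)
    · exact h8 (eqv.symm.injective h)
    · exact h9 (eqv.symm.injective h)
    · exact h10 (eqv.symm.injective h)
  refine ⟨Fin n ⊕ Fin n × Fin 5, inferInstance, BT.Gp G0,
    ⟨fun v => Sum.inl (eqv v), fun u v h => eqv.injective (Sum.inl.inj h)⟩,
    BT.gp_bowtie_free hbf0, BT.gp_good hbf0, ?_⟩
  intro u v huv
  refine BT.adj_ll.mpr ?_
  show G.Adj (eqv.symm (eqv u)) (eqv.symm (eqv v))
  rw [Equiv.symm_apply_apply, Equiv.symm_apply_apply]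
  exact huv
end

section
/- Let G be a finite bowtie-free graph with a vertex v not contained in any triangle. Then the graph G' obtained from G by adding three new vertices forming a 2-chimney with v as one of its non-central vertices is still bowtie-free. -/
/-- The graph obtained from `G` by attaching a fresh 2-chimney with `v` playing the
role of the non-central vertex `v₁`: `inr 0 = u_L`, `inr 1 = u_R`, `inr 2 = v₂`. -/
def attach2Chimney {V : Type*} (G : SimpleGraph V) (v : V) : SimpleGraph (V ⊕ Fin 3) :=
  SimpleGraph.fromRel (fun a b =>
    (∃ x y : V, a = Sum.inl x ∧ b = Sum.inl y ∧ G.Adj x y) ∨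
    (a = Sum.inr 0 ∧ b = Sum.inr 1) ∨
    (a = Sum.inl v ∧ (b = Sum.inr 0 ∨ b = Sum.inr 1)) ∨
    (a = Sum.inr 2 ∧ (b = Sum.inr 0 ∨ b = Sum.inr 1)))

open Sum

lemma adj_ll {V : Type*} {G : SimpleGraph V} {v x y : V}
    (h : (attach2Chimney G v).Adj (inl x) (inl y)) : G.Adj x y := by
  rw [attach2Chimney, SimpleGraph.fromRel_adj] at h
  obtain ⟨hne, h | h⟩ := h <;> simp_all
  exact h.symm

lemma adj_lr {V : Type*} {G : SimpleGraph V} {v x : V} {i : Fin 3}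
    (h : (attach2Chimney G v).Adj (inl x) (inr i)) : x = v ∧ (i = 0 ∨ i = 1) := by
  rw [attach2Chimney, SimpleGraph.fromRel_adj] at h
  obtain ⟨hne, h | h⟩ := h <;> simp_all

lemma adj_rr {V : Type*} {G : SimpleGraph V} {v : V} {i j : Fin 3}
    (h : (attach2Chimney G v).Adj (inr i) (inr j)) : i ≠ j := by
  rw [attach2Chimney, SimpleGraph.fromRel_adj] at h
  simpa using h.1

lemma mkTri {V : Type*} [DecidableEq V] {G : SimpleGraph V} {x y z : V}
    (hxy : G.Adj x y) (hxz : G.Adj x z) (hyz : G.Adj y z) : IsTriangle G {x, y, z} := by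
  constructor
  · rw [Finset.card_insert_of_notMem (by simp [hxy.ne, hxz.ne]),
      Finset.card_insert_of_notMem (by simp [hyz.ne]), Finset.card_singleton]
  · intro u hu w hw hne
    simp only [Finset.mem_insert, Finset.mem_singleton] at hu hw
    rcases hu with rfl | rfl | rfl <;> rcases hw with rfl | rfl | rfl <;>
      first | exact absurd rfl hne | assumption | exact hxy.symm | exact hxz.symm | exact hyz.symm

lemma fin3_four (i j k l : Fin 3) (h1 : i ≠ j) (h2 : i ≠ k) (h3 : i ≠ l)
    (h4 : j ≠ k) (h5 : j ≠ l) (h6 : k ≠ l) : False := by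
  have := i.isLt; have := j.isLt; have := k.isLt; have := l.isLt
  simp only [Ne, Fin.ext_iff] at h1 h2 h3 h4 h5 h6
  omega

lemma fin3_three01 (i j k : Fin 3) (hi : i = 0 ∨ i = 1) (hj : j = 0 ∨ j = 1)
    (hk : k = 0 ∨ k = 1) (h1 : i ≠ j) (h2 : i ≠ k) (h3 : j ≠ k) : False := by
  rcases hi with rfl|rfl <;> rcases hj with rfl|rfl <;> rcases hk with rfl|rfl <;> simp_all

/-- If `v` is in no triangle of a finite bowtie-free graph `G`, then attaching a
2-chimney at `v` keeps the graph bowtie-free. -/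
theorem attach2Chimney_bowtieFree {V : Type*} [Fintype V] (G : SimpleGraph V) (v : V)
    (hbf : ¬ HasBowtie G)
    (hv : ∀ t : Finset V, ¬ (IsTriangle G t ∧ v ∈ t)) :
    ¬ HasBowtie (attach2Chimney G v) := by
  rintro ⟨a, b, c, d, e, hab, hac, had, hae, hbc, hbd, hbe, hcd, hce, hde,
    Aab, Aac, Abc, Aad, Aae, Ade⟩
  classical
  rcases a with x | i
  · rcases b with y | i
    · rcases c with z | j
      · -- triangle abc all inl
        rcases d with w | i
        · rcases e with u | i
          · -- all inl : bowtie in G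
            simp only [ne_eq, inl.injEq] at hab hac had hae hbc hbd hbe hcd hce hde
            exact hbf ⟨x, y, z, w, u, hab, hac, had, hae, hbc, hbd, hbe, hcd, hce, hde,
              adj_ll Aab, adj_ll Aac, adj_ll Abc, adj_ll Aad, adj_ll Aae, adj_ll Ade⟩
          · -- e = inr i : x = v and w = v
            obtain ⟨rfl, -⟩ := adj_lr Aae
            obtain ⟨rfl, -⟩ := adj_lr Ade
            exact had rfl
        · rcases e with u | k
          · -- d = inr i, e = inl u
            obtain ⟨rfl, -⟩ := adj_lr Aad
            obtain ⟨rfl, -⟩ := adj_lr Ade.symm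
            exact hae rfl
          · -- d, e both inr : triangle {x,y,z} in G with x = v
            obtain ⟨hxv, -⟩ := adj_lr Aad
            exact hv {x, y, z} ⟨mkTri (adj_ll Aab) (adj_ll Aac) (adj_ll Abc), by simp [← hxv]⟩
      · -- c = inr j, b = inl y
        obtain ⟨rfl, -⟩ := adj_lr Aac
        obtain ⟨rfl, -⟩ := adj_lr Abc
        exact hab rfl
    · rcases c with z | j
      · -- b = inr i, c = inl z
        obtain ⟨rfl, -⟩ := adj_lr Aab
        obtain ⟨rfl, -⟩ := adj_lr Abc.symm
        exact hac rfl
      · -- b = inr i, c = inr j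
        obtain ⟨hxv, hi⟩ := adj_lr Aab
        obtain ⟨-, hj⟩ := adj_lr Aac
        rcases d with w | k
        · rcases e with u | k
          · -- d, e inl : triangle {x, w, u} in G
            exact hv {x, w, u} ⟨mkTri (adj_ll Aad) (adj_ll Aae) (adj_ll Ade), by simp [← hxv]⟩
          · -- d = inl w, e = inr k
            obtain ⟨hwv, -⟩ := adj_lr Ade
            exact had (by rw [hxv, hwv])
        · -- d = inr k : i, j, k distinct in {0,1}
          obtain ⟨-, hk⟩ := adj_lr Aad
          simp only [ne_eq, inr.injEq] at hbc hbd hcd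
          exact fin3_three01 _ _ _ hi hj hk hbc hbd hcd
  · -- a = inr i
    rcases b with y | j
    · rcases c with z | k
      · -- b, c both inl : both = v
        obtain ⟨rfl, -⟩ := adj_lr Aab.symm
        obtain ⟨rfl, -⟩ := adj_lr Aac.symm
        exact hbc rfl
      · -- b = inl y, c = inr k
        obtain ⟨rfl, hi⟩ := adj_lr Aab.symm
        obtain ⟨-, hk⟩ := adj_lr Abc
        rcases d with w | l
        · obtain ⟨rfl, -⟩ := adj_lr Aad.symm
          exact hbd rfl
        · rcases e with u | m
          · obtain ⟨rfl, -⟩ := adj_lr Aae.symm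
            exact hbe rfl
          · simp only [ne_eq, inr.injEq] at hac had hae hcd hce hde
            exact fin3_four _ _ _ _ hac had hae hcd hce hde
    · rcases c with z | k
      · -- b = inr j, c = inl z
        obtain ⟨rfl, hi⟩ := adj_lr Aac.symm
        obtain ⟨-, hj⟩ := adj_lr Abc.symm
        rcases d with w | l
        · obtain ⟨rfl, -⟩ := adj_lr Aad.symm
          exact hcd rfl
        · rcases e with u | m
          · obtain ⟨rfl, -⟩ := adj_lr Aae.symm
            exact hce rfl
          · simp only [ne_eq, inr.injEq] at hab hbd hbe had hae hde
            exact fin3_four _ _ _ _ hab had hae hbd hbe hde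
      · -- b = inr j, c = inr k
        rcases d with w | l
        · rcases e with u | m
          · obtain ⟨rfl, -⟩ := adj_lr Aad.symm
            obtain ⟨rfl, -⟩ := adj_lr Aae.symm
            exact hde rfl
          · -- d = inl w, e = inr m
            obtain ⟨rfl, hi⟩ := adj_lr Aad.symm
            obtain ⟨-, hm⟩ := adj_lr Ade
            simp only [ne_eq, inr.injEq] at hab hac hae hbc hbe hce
            exact fin3_four _ _ _ _ hab hac hae hbc hbe hce
        · rcases e with u | m
          · -- d = inr l, e = inl u
            obtain ⟨rfl, hi⟩ := adj_lr Aae.symm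
            obtain ⟨-, hl⟩ := adj_lr Ade.symm
            simp only [ne_eq, inr.injEq] at hab hac had hbc hbd hcd
            exact fin3_four _ _ _ _ hab hac had hbc hbd hcd
          · -- all inr : b,c,d,e four distinct Fin 3
            simp only [ne_eq, inr.injEq] at hbc hbd hbe hcd hce hde
            exact fin3_four _ _ _ _ hbc hbd hbe hcd hce hde
end

section
/- Let G be a good bowtie-free graph and let E_0 be the set of edges of G that lie in some triangle. Then the graph (V(G), E_0) is a disjoint union of copies of chimneys C_n (n ≥ 2) and copies of K4. -/
/-- The subgraph of `G` consisting of the edges lying in some triangle. -/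
def triEdges {V : Type*} (G : SimpleGraph V) : SimpleGraph V where
  Adj u v := G.Adj u v ∧ ∃ w, G.Adj u w ∧ G.Adj v w
  symm := ⟨fun _ _ h => ⟨h.1.symm, h.2.choose, h.2.choose_spec.2, h.2.choose_spec.1⟩⟩
  loopless := ⟨fun _ h => G.loopless.irrefl _ h.1⟩

/-- `w` lies in at least two triangles of `G`. -/
def InTwoTriangles {V : Type*} (G : SimpleGraph V) (w : V) : Prop :=
  ∃ t₁ t₂ : Finset V, t₁ ≠ t₂ ∧ IsTriangle G t₁ ∧ IsTriangle G t₂ ∧ w ∈ t₁ ∧ w ∈ t₂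

section Helpers

variable {V : Type*} {G : SimpleGraph V}

lemma bowtie' (hbf : ¬ HasBowtie G) {a b c d e : V}
    (hbc : b ≠ c) (hbd : b ≠ d) (hbe : b ≠ e) (hcd : c ≠ d) (hce : c ≠ e) (hde : d ≠ e)
    (hab : G.Adj a b) (hac : G.Adj a c) (h1 : G.Adj b c)
    (had : G.Adj a d) (hae : G.Adj a e) (h2 : G.Adj d e) : False :=
  hbf ⟨a, b, c, d, e, hab.ne, hac.ne, had.ne, hae.ne, hbc, hbd, hbe, hcd, hce, hde,
    hab, hac, h1, had, hae, h2⟩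

lemma reach_mem {T : Set V} (hcl : ∀ x ∈ T, ∀ y, G.Adj x y → y ∈ T) {u w : V}
    (h : G.Reachable u w) (hu : u ∈ T) : w ∈ T := by
  obtain ⟨p⟩ := h
  induction p with
  | nil => exact hu
  | cons h' p ih => exact ih (hcl _ hu _ h')

lemma tri_mem_k4 (hbf : ¬ HasBowtie G) {x p q r y w : V}
    (hxp : G.Adj x p) (hxq : G.Adj x q) (hxr : G.Adj x r)
    (hpq : G.Adj p q) (hpr : G.Adj p r) (hqr : G.Adj q r)
    (hxy : G.Adj x y) (hxw : G.Adj x w) (hyw : G.Adj y w) :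
    y = p ∨ y = q ∨ y = r := by
  by_contra h
  push_neg at h
  obtain ⟨h1, h2, h3⟩ := h
  rcases eq_or_ne w p with rfl | hwp
  · exact bowtie' hbf hyw.ne h2 h3 hpq.ne hpr.ne hqr.ne hxy hxw hyw hxq hxr hqr
  rcases eq_or_ne w q with rfl | hwq
  · exact bowtie' hbf hyw.ne h1 h3 hpq.ne' hqr.ne hpr.ne hxy hxw hyw hxp hxr hpr
  · exact bowtie' hbf hyw.ne h1 h2 hwp hwq hpq.ne hxy hxw hyw hxp hxq hpq

lemma subaux (hbf : ¬ HasBowtie G) {a b s s' w : V} (hab : G.Adj a b)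
    (hsa : G.Adj a s) (hsb : G.Adj b s) (hs'a : G.Adj a s') (hs'b : G.Adj b s')
    (hss' : s ≠ s') (hnot : ¬ G.Adj s s')
    (hsw : G.Adj s w) (haw : G.Adj a w) (hwb : w ≠ b) : False := by
  rcases eq_or_ne w s' with rfl | hws'
  · exact hnot hsw
  · exact bowtie' hbf hsw.ne hsb.ne' hss' hwb hws' hs'b.ne hsa haw hsw hab hs'a hs'b

lemma tri_at_base (hbf : ¬ HasBowtie G) {a b s0 s1 y w : V} (hab : G.Adj a b)
    (hs0a : G.Adj a s0) (hs0b : G.Adj b s0) (hs1a : G.Adj a s1) (hs1b : G.Adj b s1)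
    (hne01 : s0 ≠ s1)
    (hind : ∀ s t, G.Adj a s → G.Adj b s → G.Adj a t → G.Adj b t → s ≠ t → ¬ G.Adj s t)
    (hay : G.Adj a y) (haw : G.Adj a w) (hyw : G.Adj y w) :
    y = b ∨ w = b := by
  by_contra h
  push_neg at h
  obtain ⟨hyb, hwb⟩ := h
  by_cases hby : G.Adj b y
  · rcases eq_or_ne y s0 with rfl | hys0
    · exact subaux hbf hab hay hby hs1a hs1b hne01
        (hind _ _ hay hby hs1a hs1b hne01) hyw haw hwb
    · exact subaux hbf hab hay hby hs0a hs0b (Ne.symm hys0).symm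
        (hind _ _ hay hby hs0a hs0b hys0) hyw haw hwb
  by_cases hbw : G.Adj b w
  · rcases eq_or_ne w s0 with rfl | hws0
    · exact subaux hbf hab haw hbw hs1a hs1b hne01
        (hind _ _ haw hbw hs1a hs1b hne01) hyw.symm hay hyb
    · exact subaux hbf hab haw hbw hs0a hs0b hws0
        (hind _ _ haw hbw hs0a hs0b hws0) hyw.symm hay hyb
  · exact bowtie' hbf hyw.ne hyb (fun h => hby (h ▸ hs0b)) hwb (fun h => hbw (h ▸ hs0b))
      hs0b.ne hay haw hyw hab hs0a hs0b

lemma tri_at_apex₁ (hbf : ¬ HasBowtie G) {a b s y w : V} (hab : G.Adj a b)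
    (hsa : G.Adj a s) (hsb : G.Adj b s)
    (hsy : G.Adj s y) (hsw : G.Adj s w) (hyw : G.Adj y w) :
    y = a ∨ y = b ∨ w = a ∨ w = b := by
  by_contra h
  push_neg at h
  obtain ⟨h1, h2, h3, h4⟩ := h
  exact bowtie' hbf hyw.ne h1 h2 h3 h4 hab.ne hsy hsw hyw hsa.symm hsb.symm hab

lemma tri_at_apex (hbf : ¬ HasBowtie G) {a b s0 s1 s y w : V} (hab : G.Adj a b)
    (hs0a : G.Adj a s0) (hs0b : G.Adj b s0) (hs1a : G.Adj a s1) (hs1b : G.Adj b s1)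
    (hne01 : s0 ≠ s1)
    (hind : ∀ p q, G.Adj a p → G.Adj b p → G.Adj a q → G.Adj b q → p ≠ q → ¬ G.Adj p q)
    (hsa : G.Adj a s) (hsb : G.Adj b s)
    (hsy : G.Adj s y) (hsw : G.Adj s w) (hyw : G.Adj y w) :
    (y = a ∧ w = b) ∨ (y = b ∧ w = a) := by
  obtain ⟨s', hs'a, hs'b, hss'⟩ : ∃ s', G.Adj a s' ∧ G.Adj b s' ∧ s ≠ s' := by
    rcases eq_or_ne s s0 with rfl | h
    · exact ⟨s1, hs1a, hs1b, hne01⟩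
    · exact ⟨s0, hs0a, hs0b, h⟩
  have hnot : ¬ G.Adj s s' := hind _ _ hsa hsb hs'a hs'b hss'
  rcases tri_at_apex₁ hbf hab hsa hsb hsy hsw hyw with rfl | rfl | rfl | rfl
  · left
    refine ⟨rfl, ?_⟩
    by_contra hwb
    exact subaux hbf hab hsa hsb hs'a hs'b hss' hnot hsw hyw hwb
  · right
    refine ⟨rfl, ?_⟩
    by_contra hwa
    exact subaux hbf hab.symm hsb hsa hs'b hs'a hss' hnot hsw hyw hwa
  · right
    refine ⟨?_, rfl⟩
    by_contra hyb
    exact subaux hbf hab hsa hsb hs'a hs'b hss' hnot hsy hyw.symm hyb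
  · left
    refine ⟨?_, rfl⟩
    by_contra hya
    exact subaux hbf hab.symm hsb hsa hs'b hs'a hss' hnot hsy hyw.symm hya

end Helpers

section K4

variable {V : Type*} {G : SimpleGraph V}

lemma triE {x y z : V} (h1 : G.Adj x y) (h2 : G.Adj x z) (h3 : G.Adj y z) :
    (triEdges G).Adj x y := ⟨h1, z, h2, h3⟩

lemma k4_component (hbf : ¬ HasBowtie G) {a b c d v : V}
    (hab : G.Adj a b) (hac : G.Adj a c) (had : G.Adj a d)
    (hbc : G.Adj b c) (hbd : G.Adj b d) (hcd : G.Adj c d)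
    (hv : v = a ∨ v = b ∨ v = c ∨ v = d) :
    Nonempty ((triEdges G).induce {w | (triEdges G).Reachable v w} ≃g
      (⊤ : SimpleGraph (Fin 4))) := by
  have hclosed : ∀ x ∈ ({a, b, c, d} : Set V), ∀ y, (triEdges G).Adj x y →
      y ∈ ({a, b, c, d} : Set V) := by
    rintro x hx y ⟨hxy, w, hxw, hyw⟩
    simp only [Set.mem_insert_iff, Set.mem_singleton_iff] at hx ⊢
    rcases hx with rfl | rfl | rfl | rfl
    · rcases tri_mem_k4 hbf hab hac had hbc hbd hcd hxy hxw hyw with rfl | rfl | rfl <;> tauto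
    · rcases tri_mem_k4 hbf hab.symm hbc hbd hac had hcd hxy hxw hyw with rfl | rfl | rfl <;> tauto
    · rcases tri_mem_k4 hbf hac.symm hbc.symm hcd hab had hbd hxy hxw hyw with rfl | rfl | rfl <;> tauto
    · rcases tri_mem_k4 hbf had.symm hbd.symm hcd.symm hab hac hbc hxy hxw hyw with rfl | rfl | rfl <;> tauto
  have hadjK : ∀ x ∈ ({a, b, c, d} : Set V), ∀ y ∈ ({a, b, c, d} : Set V), x ≠ y →
      (triEdges G).Adj x y := by
    intro x hx y hy hne
    simp only [Set.mem_insert_iff, Set.mem_singleton_iff] at hx hy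
    rcases hx with rfl | rfl | rfl | rfl <;> rcases hy with rfl | rfl | rfl | rfl <;>
      first
        | exact absurd rfl hne
        | exact triE hab hac hbc
        | exact triE hac hab hbc.symm
        | exact triE had hab hbd.symm
        | exact triE hab.symm hbc hac
        | exact triE hbc hab.symm hac.symm
        | exact triE hbd hab.symm had.symm
        | exact triE hac.symm hbc.symm hab
        | exact triE hbc.symm hac.symm hab.symm
        | exact triE hcd hac.symm had.symm
        | exact triE had.symm hbd.symm hab
        | exact triE hbd.symm had.symm hab.symm
        | exact triE hcd.symm had.symm hac.symm
  have hvK : v ∈ ({a, b, c, d} : Set V) := by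
    simp only [Set.mem_insert_iff, Set.mem_singleton_iff]; tauto
  have hset : {w | (triEdges G).Reachable v w} = ({a, b, c, d} : Set V) := by
    ext w
    simp only [Set.mem_setOf_eq]
    constructor
    · intro h; exact reach_mem hclosed h hvK
    · intro hw
      rcases eq_or_ne v w with rfl | hne
      · exact SimpleGraph.Reachable.refl _
      · exact (hadjK v hvK w hw hne).reachable
  rw [hset]
  have ma : a ∈ ({a, b, c, d} : Set V) := by simp
  have mb : b ∈ ({a, b, c, d} : Set V) := by simp
  have mc : c ∈ ({a, b, c, d} : Set V) := by simp
  have md : d ∈ ({a, b, c, d} : Set V) := by simp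
  let e : Fin 4 → ↥({a, b, c, d} : Set V) := fun i => match i with
    | 0 => ⟨a, ma⟩
    | 1 => ⟨b, mb⟩
    | 2 => ⟨c, mc⟩
    | 3 => ⟨d, md⟩
  have hbij : Function.Bijective e := by
    constructor
    · intro i j h
      have h' : (e i : V) = (e j : V) := congrArg _ h
      fin_cases i <;> fin_cases j <;>
        first
          | rfl
          | exact absurd h' hab.ne
          | exact absurd h' hac.ne
          | exact absurd h' had.ne
          | exact absurd h' hbc.ne
          | exact absurd h' hbd.ne
          | exact absurd h' hcd.ne
          | exact absurd h' hab.ne'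
          | exact absurd h' hac.ne'
          | exact absurd h' had.ne'
          | exact absurd h' hbc.ne'
          | exact absurd h' hbd.ne'
          | exact absurd h' hcd.ne'
    · rintro ⟨w, hw⟩
      simp only [Set.mem_insert_iff, Set.mem_singleton_iff] at hw
      rcases hw with rfl | rfl | rfl | rfl
      · exact ⟨0, rfl⟩
      · exact ⟨1, rfl⟩
      · exact ⟨2, rfl⟩
      · exact ⟨3, rfl⟩
  have adj_iff : ∀ x y : ↥({a, b, c, d} : Set V),
      ((triEdges G).induce ({a, b, c, d} : Set V)).Adj x y ↔ (x : V) ≠ (y : V) := by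
    intro x y
    constructor
    · intro h hc
      exact h.ne (Subtype.ext hc)
    · intro h
      exact hadjK x x.2 y y.2 h
  refine ⟨SimpleGraph.Iso.symm ⟨Equiv.ofBijective e hbij, ?_⟩⟩
  intro i j
  rw [SimpleGraph.top_adj]
  show ((triEdges G).induce _).Adj (e i) (e j) ↔ i ≠ j
  rw [adj_iff]
  constructor
  · intro h hij; exact h (by rw [hij])
  · intro h hcc; exact h (hbij.1 (Subtype.ext hcc))

end K4

section Chim

variable {V : Type*} {G : SimpleGraph V}

lemma chimney_adj {n : ℕ} {x y : Fin 2 ⊕ Fin n} :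
    (chimney n).Adj x y ↔ x ≠ y ∧ (x.isLeft ∨ y.isLeft) := Iff.rfl

lemma chimney_component [Fintype V] (hbf : ¬ HasBowtie G)
    {uL uR s0 s1 v : V} (hLR : G.Adj uL uR)
    (hs0L : G.Adj uL s0) (hs0R : G.Adj uR s0) (hs1L : G.Adj uL s1) (hs1R : G.Adj uR s1)
    (hne01 : s0 ≠ s1)
    (hind : ∀ s t, G.Adj uL s → G.Adj uR s → G.Adj uL t → G.Adj uR t → s ≠ t → ¬ G.Adj s t)
    (hv : v = uL ∨ v = uR ∨ (G.Adj uL v ∧ G.Adj uR v)) :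
    ∃ n : ℕ, 2 ≤ n ∧
      Nonempty ((triEdges G).induce {w | (triEdges G).Reachable v w} ≃g chimney n) := by
  classical
  set S : Set V := {s | G.Adj uL s ∧ G.Adj uR s} with hS
  have hmemS : ∀ s, s ∈ S ↔ (G.Adj uL s ∧ G.Adj uR s) := fun s => Iff.rfl
  set T : Set V := insert uL (insert uR S) with hT
  have hmemT : ∀ x, x ∈ T ↔ (x = uL ∨ x = uR ∨ x ∈ S) := by
    intro x
    rw [hT]
    simp [Set.mem_insert_iff]
  have huLS : uL ∉ S := fun h => G.loopless.irrefl uL ((hmemS uL).1 h).1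
  have huRS : uR ∉ S := fun h => G.loopless.irrefl uR ((hmemS uR).1 h).2
  -- closure
  have hclosed : ∀ x ∈ T, ∀ y, (triEdges G).Adj x y → y ∈ T := by
    rintro x hx y ⟨hxy, w, hxw, hyw⟩
    rcases (hmemT x).1 hx with rfl | rfl | hxS
    · rcases tri_at_base hbf hLR hs0L hs0R hs1L hs1R hne01 hind hxy hxw hyw with rfl | rfl
      · exact (hmemT y).2 (Or.inr (Or.inl rfl))
      · exact (hmemT y).2 (Or.inr (Or.inr ((hmemS y).2 ⟨hxy, hyw.symm⟩)))
    · rcases tri_at_base hbf hLR.symm hs0R hs0L hs1R hs1L hne01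
          (fun s t h1 h2 h3 h4 h5 => hind s t h2 h1 h4 h3 h5) hxy hxw hyw with rfl | rfl
      · exact (hmemT y).2 (Or.inl rfl)
      · exact (hmemT y).2 (Or.inr (Or.inr ((hmemS y).2 ⟨hyw.symm, hxy⟩)))
    · obtain ⟨hx1, hx2⟩ := (hmemS x).1 hxS
      rcases tri_at_apex hbf hLR hs0L hs0R hs1L hs1R hne01 hind hx1 hx2 hxy hxw hyw with
        ⟨rfl, rfl⟩ | ⟨rfl, rfl⟩
      · exact (hmemT y).2 (Or.inl rfl)
      · exact (hmemT y).2 (Or.inr (Or.inl rfl))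
  have hvT : v ∈ T := by
    rcases hv with rfl | rfl | hv
    · exact (hmemT v).2 (Or.inl rfl)
    · exact (hmemT v).2 (Or.inr (Or.inl rfl))
    · exact (hmemT v).2 (Or.inr (Or.inr ((hmemS v).2 hv)))
  have hreachL : ∀ x ∈ T, (triEdges G).Reachable uL x := by
    intro x hx
    rcases (hmemT x).1 hx with rfl | rfl | hxS
    · exact SimpleGraph.Reachable.refl _
    · exact (triE hLR hs0L hs0R).reachable
    · obtain ⟨h1, h2⟩ := (hmemS x).1 hxS
      exact (triE h1 hLR h2.symm).reachable
  have hset : {w | (triEdges G).Reachable v w} = T := by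
    ext w
    simp only [Set.mem_setOf_eq]
    constructor
    · intro h; exact reach_mem hclosed h hvT
    · intro hw; exact ((hreachL v hvT).symm.trans (hreachL w hw))
  haveI : Fintype ↥S := Fintype.ofFinite ↥S
  have hm2 : 2 ≤ Fintype.card ↥S := by
    have : Nontrivial ↥S := ⟨⟨⟨s0, (hmemS s0).2 ⟨hs0L, hs0R⟩⟩, ⟨s1, (hmemS s1).2 ⟨hs1L, hs1R⟩⟩,
      by simp [hne01]⟩⟩
    exact Fintype.one_lt_card
  set m : ℕ := Fintype.card ↥S with hm
  let eS : ↥S ≃ Fin m := Fintype.equivFin ↥S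
  refine ⟨m, hm2, ?_⟩
  rw [hset]
  have mL : uL ∈ T := (hmemT uL).2 (Or.inl rfl)
  have mR : uR ∈ T := (hmemT uR).2 (Or.inr (Or.inl rfl))
  have mA : ∀ j : Fin m, (eS.symm j : V) ∈ T :=
    fun j => (hmemT _).2 (Or.inr (Or.inr (eS.symm j).2))
  let g : Fin 2 ⊕ Fin m → ↥T := fun x => match x with
    | Sum.inl 0 => ⟨uL, mL⟩
    | Sum.inl 1 => ⟨uR, mR⟩
    | Sum.inr j => ⟨(eS.symm j : V), mA j⟩
  have hgbij : Function.Bijective g := by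
    constructor
    · rintro (i | j) (i' | j') h
      · have h' : (g (Sum.inl i) : V) = (g (Sum.inl i') : V) := congrArg _ h
        fin_cases i <;> fin_cases i' <;>
          first
            | rfl
            | exact absurd h' hLR.ne
            | exact absurd h' hLR.ne'
      · exfalso
        have h' : (g (Sum.inl i) : V) = (g (Sum.inr j') : V) := congrArg _ h
        fin_cases i
        · have h'' : uL = (eS.symm j' : V) := h'
          exact huLS (h'' ▸ (eS.symm j').2)
        · have h'' : uR = (eS.symm j' : V) := h'
          exact huRS (h'' ▸ (eS.symm j').2)
      · exfalso
        have h' : (g (Sum.inr j) : V) = (g (Sum.inl i') : V) := congrArg _ h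
        fin_cases i'
        · have h'' : (eS.symm j : V) = uL := h'
          exact huLS (h'' ▸ (eS.symm j).2)
        · have h'' : (eS.symm j : V) = uR := h'
          exact huRS (h'' ▸ (eS.symm j).2)
      · have h' : (g (Sum.inr j) : V) = (g (Sum.inr j') : V) := congrArg _ h
        have : eS.symm j = eS.symm j' := Subtype.ext h'
        exact congrArg Sum.inr (eS.symm.injective this)
    · rintro ⟨x, hx⟩
      rcases (hmemT x).1 hx with rfl | rfl | hxS
      · exact ⟨Sum.inl 0, rfl⟩
      · exact ⟨Sum.inl 1, rfl⟩
      · refine ⟨Sum.inr (eS ⟨x, hxS⟩), ?_⟩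
        refine Subtype.ext ?_
        show (eS.symm (eS ⟨x, hxS⟩) : V) = x
        rw [Equiv.symm_apply_apply]
  have hmap : ∀ x y, ((triEdges G).induce T).Adj (g x) (g y) ↔ (chimney m).Adj x y := by
    have hL : ∀ j : Fin m, (triEdges G).Adj uL (eS.symm j : V) :=
      fun j => triE ((hmemS _).1 (eS.symm j).2).1 hLR ((hmemS _).1 (eS.symm j).2).2.symm
    have hR : ∀ j : Fin m, (triEdges G).Adj uR (eS.symm j : V) :=
      fun j => triE ((hmemS _).1 (eS.symm j).2).2 hLR.symm ((hmemS _).1 (eS.symm j).2).1.symm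
    rintro (i | j) (i' | j')
    · fin_cases i <;> fin_cases i'
      · exact iff_of_false (fun h => (triEdges G).loopless.irrefl uL h) (fun h => h.1 rfl)
      · refine iff_of_true (triE hLR hs0L hs0R) ⟨?_, Or.inl rfl⟩
        intro h
        exact absurd (Sum.inl_injective h) (by decide)
      · refine iff_of_true (triE hLR.symm hs0R hs0L) ⟨?_, Or.inl rfl⟩
        intro h
        exact absurd (Sum.inl_injective h) (by decide)
      · exact iff_of_false (fun h => (triEdges G).loopless.irrefl uR h) (fun h => h.1 rfl)
    · fin_cases i
      · exact iff_of_true (hL j') ⟨Sum.inl_ne_inr, Or.inl rfl⟩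
      · exact iff_of_true (hR j') ⟨Sum.inl_ne_inr, Or.inl rfl⟩
    · fin_cases i'
      · exact iff_of_true (hL j).symm ⟨Sum.inr_ne_inl, Or.inr rfl⟩
      · exact iff_of_true (hR j).symm ⟨Sum.inr_ne_inl, Or.inr rfl⟩
    · refine iff_of_false ?_ ?_
      · intro h
        rcases eq_or_ne j j' with rfl | hjj'
        · exact (triEdges G).loopless.irrefl _ h
        · have hne : (eS.symm j : V) ≠ (eS.symm j' : V) :=
            fun hval => hjj' (eS.symm.injective (Subtype.ext hval))
          exact hind _ _ ((hmemS _).1 (eS.symm j).2).1 ((hmemS _).1 (eS.symm j).2).2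
            ((hmemS _).1 (eS.symm j').2).1 ((hmemS _).1 (eS.symm j').2).2 hne h.1
      · rintro ⟨-, h | h⟩ <;> simp at h
  exact ⟨SimpleGraph.Iso.symm ⟨Equiv.ofBijective g hgbij, fun {x y} => hmap x y⟩⟩

end Chim

/-- In a good bowtie-free graph, the graph of triangle edges is a disjoint union of
chimneys `C_n` (`n ≥ 2`) and copies of `K₄`: each connected component of `triEdges G`
is isomorphic to a chimney or to `K₄`. -/
theorem goodGraph_triEdges_components {V : Type*} [Fintype V] (G : SimpleGraph V)
    (hbf : ¬ HasBowtie G) (hg : GoodGraph G) (v : V) :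
    (∃ n : ℕ, 2 ≤ n ∧
        Nonempty ((triEdges G).induce {w | (triEdges G).Reachable v w} ≃g chimney n)) ∨
      Nonempty ((triEdges G).induce {w | (triEdges G).Reachable v w} ≃g
        (⊤ : SimpleGraph (Fin 4))) := by
  rcases hg v with ⟨n, hn, f, hf, hvr⟩ | ⟨f, hf, hvr⟩
  · -- chimney copy
    have hLR : G.Adj (f (Sum.inl 0)) (f (Sum.inl 1)) :=
      hf _ _ ⟨Sum.inl_injective.ne (by decide), Or.inl rfl⟩
    have hapex : ∀ j : Fin n, G.Adj (f (Sum.inl 0)) (f (Sum.inr j)) ∧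
        G.Adj (f (Sum.inl 1)) (f (Sum.inr j)) :=
      fun j => ⟨hf _ _ ⟨Sum.inl_ne_inr, Or.inl rfl⟩,
        hf _ _ ⟨Sum.inl_ne_inr, Or.inl rfl⟩⟩
    let j0 : Fin n := ⟨0, by omega⟩
    let j1 : Fin n := ⟨1, by omega⟩
    have hne01 : f (Sum.inr j0) ≠ f (Sum.inr j1) :=
      f.injective.ne (Sum.inr_injective.ne (Fin.ne_of_val_ne (by norm_num)))
    have hvcase : v = f (Sum.inl 0) ∨ v = f (Sum.inl 1) ∨
        (G.Adj (f (Sum.inl 0)) v ∧ G.Adj (f (Sum.inl 1)) v) := by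
      obtain ⟨x, rfl⟩ := hvr
      rcases x with i | j
      · fin_cases i
        · exact Or.inl rfl
        · exact Or.inr (Or.inl rfl)
      · exact Or.inr (Or.inr (hapex j))
    by_cases hEx : ∃ s t, G.Adj (f (Sum.inl 0)) s ∧ G.Adj (f (Sum.inl 1)) s ∧
        G.Adj (f (Sum.inl 0)) t ∧ G.Adj (f (Sum.inl 1)) t ∧ s ≠ t ∧ G.Adj s t
    · obtain ⟨s, t, h1, h2, h3, h4, h5, h6⟩ := hEx
      have hv4 : v = f (Sum.inl 0) ∨ v = f (Sum.inl 1) ∨ v = s ∨ v = t := by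
        rcases hvcase with rfl | rfl | hva
        · exact Or.inl rfl
        · exact Or.inr (Or.inl rfl)
        · by_cases hvs : v = s
          · exact Or.inr (Or.inr (Or.inl hvs))
          by_cases hvt : v = t
          · exact Or.inr (Or.inr (Or.inr hvt))
          · exact absurd (bowtie' hbf h5 h2.ne' (Ne.symm hvs) h4.ne' (Ne.symm hvt)
              hva.2.ne h1 h3 h6 hLR hva.1 hva.2) not_false
      exact Or.inr (k4_component hbf hLR h1 h3 h2 h4 h6 hv4)
    · push_neg at hEx
      exact Or.inl (chimney_component hbf hLR (hapex j0).1 (hapex j0).2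
        (hapex j1).1 (hapex j1).2 hne01 hEx hvcase)
  · -- K4 copy
    have hadj : ∀ i j : Fin 4, i ≠ j → G.Adj (f i) (f j) :=
      fun i j h => hf i j ((SimpleGraph.top_adj i j).2 h)
    have hv4 : v = f 0 ∨ v = f 1 ∨ v = f 2 ∨ v = f 3 := by
      obtain ⟨x, rfl⟩ := hvr
      fin_cases x
      · exact Or.inl rfl
      · exact Or.inr (Or.inl rfl)
      · exact Or.inr (Or.inr (Or.inl rfl))
      · exact Or.inr (Or.inr (Or.inr rfl))
    exact Or.inr (k4_component hbf (hadj 0 1 (by decide)) (hadj 0 2 (by decide))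
      (hadj 0 3 (by decide)) (hadj 1 2 (by decide)) (hadj 1 3 (by decide))
      (hadj 2 3 (by decide)) hv4)
end

section
/- Let G be a graph whose edge set is partitioned into E_0 and E_1, where (V, E_0) is a disjoint union of chimneys C_n (n ≥ 2) and copies of K4, and no edge of E_1 lies in any triangle of G. Then G is bowtie-free. -/
lemma chimney_left_mem {n : ℕ} {x y z : Fin 2 ⊕ Fin n}
    (hxy : (chimney n).Adj x y) (hyz : (chimney n).Adj y z)
    (hxz : (chimney n).Adj x z) (i : Fin 2) :
    x = Sum.inl i ∨ y = Sum.inl i ∨ z = Sum.inl i := by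
  rcases x with a|a <;> rcases y with b|b <;> rcases z with c|c <;>
    simp_all [chimney] <;> omega

/-- If the edge set of `G` is partitioned into `G₀` (a disjoint union of chimneys
`C_n`, `n ≥ 2`, and copies of `K₄`) and `G₁` whose edges lie in no triangle of `G`,
then `G` is bowtie-free. -/
theorem bowtieFree_of_partition {V : Type*} (G G₀ G₁ : SimpleGraph V)
    (hunion : G = G₀ ⊔ G₁)
    (hdisj : ∀ u v : V, ¬ (G₀.Adj u v ∧ G₁.Adj u v))
    (hcomp : ∀ v : V,
      (∃ n : ℕ, 2 ≤ n ∧ Nonempty (G₀.induce {w | G₀.Reachable v w} ≃g chimney n)) ∨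
        Nonempty (G₀.induce {w | G₀.Reachable v w} ≃g (⊤ : SimpleGraph (Fin 4))))
    (hE1 : ∀ u v : V, G₁.Adj u v → ¬ ∃ w : V, G.Adj u w ∧ G.Adj v w) :
    ¬ HasBowtie G := by
  rintro ⟨a, b, c, d, e, hab', hac', had', hae', hbc', hbd', hbe', hcd', hce', hde',
    Hab, Hac, Hbc, Had, Hae, Hde⟩
  -- every edge in a triangle of G lies in G₀
  have key : ∀ u v w : V, G.Adj u v → G.Adj u w → G.Adj v w → G₀.Adj u v := by
    intro u v w huv huw hvw
    have huv' := huv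
    rw [hunion, SimpleGraph.sup_adj] at huv'
    rcases huv' with h | h
    · exact h
    · exact absurd ⟨w, huw, hvw⟩ (hE1 u v h)
  have hab : G₀.Adj a b := key a b c Hab Hac Hbc
  have hac : G₀.Adj a c := key a c b Hac Hab Hbc.symm
  have hbc : G₀.Adj b c := key b c a Hbc Hab.symm Hac.symm
  have had : G₀.Adj a d := key a d e Had Hae Hde
  have hae : G₀.Adj a e := key a e d Hae Had Hde.symm
  have hde : G₀.Adj d e := key d e a Hde Had.symm Hae.symm
  -- all five vertices are in the component of a
  set S : Set V := {w | G₀.Reachable a w} with hS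
  have ha : a ∈ S := SimpleGraph.Reachable.refl a
  have hb : b ∈ S := hab.reachable
  have hc : c ∈ S := hac.reachable
  have hd : d ∈ S := had.reachable
  have he : e ∈ S := hae.reachable
  have induce_adj : ∀ (u v : V) (hu : u ∈ S) (hv : v ∈ S),
      G₀.Adj u v → (G₀.induce S).Adj ⟨u, hu⟩ ⟨v, hv⟩ := by
    intro u v hu hv h
    simpa [SimpleGraph.comap_adj] using h
  rcases hcomp a with ⟨n, -, hch⟩ | hK
  · -- chimney case
    obtain ⟨φ⟩ := hch
    set fa := φ ⟨a, ha⟩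
    set fb := φ ⟨b, hb⟩
    set fc := φ ⟨c, hc⟩
    set fd := φ ⟨d, hd⟩
    set fe := φ ⟨e, he⟩
    have inj : ∀ (u v : V) (hu : u ∈ S) (hv : v ∈ S),
        φ ⟨u, hu⟩ = φ ⟨v, hv⟩ → u = v := by
      intro u v hu hv h
      have := φ.toEquiv.injective h
      exact congrArg Subtype.val this
    have pab : (chimney n).Adj fa fb := φ.map_adj_iff.mpr (induce_adj a b ha hb hab)
    have pac : (chimney n).Adj fa fc := φ.map_adj_iff.mpr (induce_adj a c ha hc hac)
    have pbc : (chimney n).Adj fb fc := φ.map_adj_iff.mpr (induce_adj b c hb hc hbc)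
    have pad : (chimney n).Adj fa fd := φ.map_adj_iff.mpr (induce_adj a d ha hd had)
    have pae : (chimney n).Adj fa fe := φ.map_adj_iff.mpr (induce_adj a e ha he hae)
    have pde : (chimney n).Adj fd fe := φ.map_adj_iff.mpr (induce_adj d e hd he hde)
    have L0 := chimney_left_mem pab pbc pac 0
    have L1 := chimney_left_mem pab pbc pac 1
    have R0 := chimney_left_mem pad pde pae 0
    have R1 := chimney_left_mem pad pde pae 1
    have hfa0 : fa = Sum.inl 0 := by
      rcases L0 with h | h | h
      · exact h
      · rcases R0 with h' | h' | h'
        · exact ((hab'.symm) (inj _ _ _ _ (h.trans h'.symm))).elim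
        · exact ((hbd') (inj _ _ _ _ (h.trans h'.symm))).elim
        · exact ((hbe') (inj _ _ _ _ (h.trans h'.symm))).elim
      · rcases R0 with h' | h' | h'
        · exact ((hac'.symm) (inj _ _ _ _ (h.trans h'.symm))).elim
        · exact ((hcd') (inj _ _ _ _ (h.trans h'.symm))).elim
        · exact ((hce') (inj _ _ _ _ (h.trans h'.symm))).elim
    have hfa1 : fa = Sum.inl 1 := by
      rcases L1 with h | h | h
      · exact h
      · rcases R1 with h' | h' | h'
        · exact ((hab'.symm) (inj _ _ _ _ (h.trans h'.symm))).elim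
        · exact ((hbd') (inj _ _ _ _ (h.trans h'.symm))).elim
        · exact ((hbe') (inj _ _ _ _ (h.trans h'.symm))).elim
      · rcases R1 with h' | h' | h'
        · exact ((hac'.symm) (inj _ _ _ _ (h.trans h'.symm))).elim
        · exact ((hcd') (inj _ _ _ _ (h.trans h'.symm))).elim
        · exact ((hce') (inj _ _ _ _ (h.trans h'.symm))).elim
    rw [hfa0] at hfa1
    simp at hfa1
  · -- K₄ case: five distinct vertices in Fin 4
    obtain ⟨φ⟩ := hK
    set fa := φ ⟨a, ha⟩
    set fb := φ ⟨b, hb⟩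
    set fc := φ ⟨c, hc⟩
    set fd := φ ⟨d, hd⟩
    set fe := φ ⟨e, he⟩
    have inj : ∀ (u v : V) (hu : u ∈ S) (hv : v ∈ S),
        φ ⟨u, hu⟩ = φ ⟨v, hv⟩ → u = v := by
      intro u v hu hv h
      exact congrArg Subtype.val (φ.toEquiv.injective h)
    have nab : fa ≠ fb := fun h => hab' (inj _ _ _ _ h)
    have nac : fa ≠ fc := fun h => hac' (inj _ _ _ _ h)
    have nad : fa ≠ fd := fun h => had' (inj _ _ _ _ h)
    have nae : fa ≠ fe := fun h => hae' (inj _ _ _ _ h)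
    have nbc : fb ≠ fc := fun h => hbc' (inj _ _ _ _ h)
    have nbd : fb ≠ fd := fun h => hbd' (inj _ _ _ _ h)
    have nbe : fb ≠ fe := fun h => hbe' (inj _ _ _ _ h)
    have ncd : fc ≠ fd := fun h => hcd' (inj _ _ _ _ h)
    have nce : fc ≠ fe := fun h => hce' (inj _ _ _ _ h)
    have nde : fd ≠ fe := fun h => hde' (inj _ _ _ _ h)
    have hcard : ({fa, fb, fc, fd, fe} : Finset (Fin 4)).card = 5 := by
      rw [Finset.card_insert_of_notMem (by simp [nab, nac, nad, nae]),
        Finset.card_insert_of_notMem (by simp [nbc, nbd, nbe]),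
        Finset.card_insert_of_notMem (by simp [ncd, nce]),
        Finset.card_insert_of_notMem (by simp [nde]),
        Finset.card_singleton]
    have hle := Finset.card_le_univ ({fa, fb, fc, fd, fe} : Finset (Fin 4))
    rw [hcard] at hle
    simp at hle
end

section
/- In a good bowtie-free graph, the centre of any vertex v (the set of vertices lying in two or more triangles and in the same E_0-component as v, where E_0 is the set of triangle edges) is either a single edge (two adjacent vertices) or the vertex set of a K4. -/
lemma triEdges_adj {V : Type*} {G : SimpleGraph V} {a b : V} :
    (triEdges G).Adj a b ↔ G.Adj a b ∧ ∃ c, G.Adj a c ∧ G.Adj b c := Iff.rfl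

lemma share {V : Type*} {G : SimpleGraph V} (hbf : ¬ HasBowtie G) {w b c d e : V}
    (hbc : G.Adj b c) (hde : G.Adj d e) (hwb : G.Adj w b) (hwc : G.Adj w c)
    (hwd : G.Adj w d) (hwe : G.Adj w e) : b = d ∨ b = e ∨ c = d ∨ c = e := by
  by_contra h
  push_neg at h
  obtain ⟨h1, h2, h3, h4⟩ := h
  exact hbf ⟨w, b, c, d, e, hwb.ne, hwc.ne, hwd.ne, hwe.ne, hbc.ne, h1, h2, h3, h4, hde.ne,
    hwb, hwc, hbc, hwd, hwe, hde⟩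

lemma reach_closed {V : Type*} {H : SimpleGraph V} {S : Set V}
    (hS : ∀ a b, a ∈ S → H.Adj a b → b ∈ S) {a b : V}
    (h : H.Reachable a b) (ha : a ∈ S) : b ∈ S := by
  obtain ⟨p⟩ := h
  induction p with
  | nil => exact ha
  | cons h' p ih => exact ih (hS _ _ ha h')

lemma isTriangle_triple {V : Type*} [DecidableEq V] {G : SimpleGraph V} {a b c : V}
    (hab : G.Adj a b) (hac : G.Adj a c) (hbc : G.Adj b c) :
    IsTriangle G {a, b, c} := by
  refine ⟨Finset.card_eq_three.mpr ⟨a, b, c, hab.ne, hac.ne, hbc.ne, rfl⟩, ?_⟩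
  intro u hu v hv huv
  simp only [Finset.mem_insert, Finset.mem_singleton] at hu hv
  rcases hu with rfl | rfl | rfl <;> rcases hv with rfl | rfl | rfl <;>
    first
    | exact absurd rfl huv
    | assumption
    | exact hab.symm
    | exact hac.symm
    | exact hbc.symm

lemma inTwo_mk {V : Type*} [DecidableEq V] {G : SimpleGraph V} {a b c d : V}
    (hab : G.Adj a b) (hac : G.Adj a c) (hbc : G.Adj b c) (had : G.Adj a d)
    (hbd : G.Adj b d) (hcd : c ≠ d) : InTwoTriangles G a := by
  refine ⟨{a, b, c}, {a, b, d}, ?_, isTriangle_triple hab hac hbc,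
    isTriangle_triple hab had hbd, by simp, by simp⟩
  intro h
  have hc : c ∈ ({a, b, d} : Finset V) := h ▸ (by simp : c ∈ ({a, b, c} : Finset V))
  simp only [Finset.mem_insert, Finset.mem_singleton] at hc
  rcases hc with rfl | rfl | rfl
  · exact hac.ne rfl
  · exact hbc.ne rfl
  · exact hcd rfl

lemma tri_mem {V : Type*} [DecidableEq V] {G : SimpleGraph V} {t : Finset V} {w : V}
    (ht : IsTriangle G t) (hw : w ∈ t) :
    ∃ y z, G.Adj w y ∧ G.Adj w z ∧ G.Adj y z ∧ t = {w, y, z} := by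
  obtain ⟨a, b, c, hab, hac, hbc, rfl⟩ := Finset.card_eq_three.mp ht.1
  have adj := ht.2
  have ha : a ∈ ({a,b,c} : Finset V) := by simp
  have hb : b ∈ ({a,b,c} : Finset V) := by simp
  have hc : c ∈ ({a,b,c} : Finset V) := by simp
  simp only [Finset.mem_insert, Finset.mem_singleton] at hw
  rcases hw with rfl | rfl | rfl
  · exact ⟨b, c, adj _ ha _ hb hab, adj _ ha _ hc hac, adj _ hb _ hc hbc, rfl⟩
  · exact ⟨a, c, adj _ hb _ ha (Ne.symm hab), adj _ hb _ hc hbc, adj _ ha _ hc hac,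
      by ext u; simp; tauto⟩
  · exact ⟨a, b, adj _ hc _ ha (Ne.symm hac), adj _ hc _ hb (Ne.symm hbc), adj _ ha _ hb hab,
      by ext u; simp; tauto⟩

lemma caseB {V : Type*} [DecidableEq V] {G : SimpleGraph V} (hbf : ¬ HasBowtie G)
    {w x p q : V} (hwx : G.Adj w x) (hwp : G.Adj w p) (hxp : G.Adj x p)
    (hwq : G.Adj w q) (hxq : G.Adj x q) (hpq : p ≠ q) (hnpq : ¬ G.Adj p q) :
    {u | (triEdges G).Reachable w u ∧ InTwoTriangles G u} = {w, x} := by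
  -- every triangle through w contains x
  have B1 : ∀ y z, G.Adj w y → G.Adj w z → G.Adj y z → y = x ∨ z = x := by
    intro y z hwy hwz hyz
    have s1 := share hbf hyz hxp hwy hwz hwx hwp
    have s2 := share hbf hyz hxq hwy hwz hwx hwq
    rcases s1 with rfl | rfl | rfl | rfl
    · exact Or.inl rfl
    · rcases s2 with rfl | h | rfl | rfl
      · exact Or.inl rfl
      · exact absurd h hpq
      · exact Or.inr rfl
      · first | exact absurd hyz hnpq | exact absurd hyz.symm hnpq
    · exact Or.inr rfl
    · rcases s2 with rfl | h | rfl | h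
      · exact Or.inl rfl
      · subst h; first | exact absurd hyz.symm hnpq | exact absurd hyz hnpq
      · exact Or.inr rfl
      · exact absurd h hpq
  -- every triangle through x contains w
  have B2 : ∀ y z, G.Adj x y → G.Adj x z → G.Adj y z → y = w ∨ z = w := by
    intro y z hxy hxz hyz
    have s1 := share hbf hyz hwp hxy hxz hwx.symm hxp
    have s2 := share hbf hyz hwq hxy hxz hwx.symm hxq
    rcases s1 with rfl | rfl | rfl | rfl
    · exact Or.inl rfl
    · rcases s2 with rfl | h | rfl | rfl
      · exact Or.inl rfl
      · exact absurd h hpq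
      · exact Or.inr rfl
      · first | exact absurd hyz hnpq | exact absurd hyz.symm hnpq
    · exact Or.inr rfl
    · rcases s2 with rfl | h | rfl | h
      · exact Or.inl rfl
      · subst h; first | exact absurd hyz.symm hnpq | exact absurd hyz hnpq
      · exact Or.inr rfl
      · exact absurd h hpq
  -- every triangle through a common neighbour r is {r, w, x}
  have B3 : ∀ r y z, G.Adj w r → G.Adj x r → G.Adj r y → G.Adj r z → G.Adj y z →
      (y = w ∧ z = x) ∨ (y = x ∧ z = w) := by
    intro r y z hwr hxr hry hrz hyz
    have s1 := share hbf hyz hwx hry hrz hwr.symm hxr.symm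
    rcases s1 with rfl | rfl | rfl | rfl
    · rcases B1 r z hwr hyz hrz with rfl | rfl
      · exact absurd rfl hxr.ne'
      · exact Or.inl ⟨rfl, rfl⟩
    · rcases B2 r z hxr hyz hrz with rfl | rfl
      · exact absurd rfl hwr.ne'
      · exact Or.inr ⟨rfl, rfl⟩
    · rcases B1 r y hwr hyz.symm hry with rfl | rfl
      · exact absurd rfl hxr.ne'
      · exact Or.inr ⟨rfl, rfl⟩
    · rcases B2 r y hxr hyz.symm hry with rfl | rfl
      · exact absurd rfl hwr.ne'
      · exact Or.inl ⟨rfl, rfl⟩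
  set S : Set V := {u | u = w ∨ u = x ∨ (G.Adj w u ∧ G.Adj x u)} with hSdef
  have hcl : ∀ a b, a ∈ S → (triEdges G).Adj a b → b ∈ S := by
    intro a b ha hab
    obtain ⟨hab', z, haz, hbz⟩ := triEdges_adj.mp hab
    rcases ha with rfl | rfl | ⟨hwa, hxa⟩
    · rcases B1 b z hab' haz hbz with rfl | rfl
      · exact Or.inr (Or.inl rfl)
      · exact Or.inr (Or.inr ⟨hab', hbz.symm⟩)
    · rcases B2 b z hab' haz hbz with rfl | rfl
      · exact Or.inl rfl
      · exact Or.inr (Or.inr ⟨hbz.symm, hab'⟩)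
    · rcases B3 a b z hwa hxa hab' haz hbz with ⟨rfl, rfl⟩ | ⟨rfl, rfl⟩
      · exact Or.inl rfl
      · exact Or.inr (Or.inl rfl)
  ext u
  simp only [Set.mem_setOf_eq, Set.mem_insert_iff, Set.mem_singleton_iff]
  constructor
  · rintro ⟨hr, h2⟩
    have hu : u ∈ S := reach_closed hcl hr (Or.inl rfl)
    rcases hu with rfl | rfl | ⟨hwu, hxu⟩
    · exact Or.inl rfl
    · exact Or.inr rfl
    · exfalso
      obtain ⟨t1, t2, hne, ht1, ht2, hm1, hm2⟩ := h2
      obtain ⟨y, z, h1, h2', h3, rfl⟩ := tri_mem ht1 hm1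
      obtain ⟨y', z', g1, g2, g3, rfl⟩ := tri_mem ht2 hm2
      apply hne
      rcases B3 u y z hwu hxu h1 h2' h3 with ⟨rfl, rfl⟩ | ⟨rfl, rfl⟩ <;>
        rcases B3 u y' z' hwu hxu g1 g2 g3 with ⟨rfl, rfl⟩ | ⟨rfl, rfl⟩ <;>
        (ext a; simp; try tauto)
  · rintro (rfl | rfl)
    · exact ⟨SimpleGraph.Reachable.refl u, inTwo_mk hwx hwp hxp hwq hxq hpq⟩
    · exact ⟨(SimpleGraph.Adj.reachable (triEdges_adj.mpr ⟨hwx, p, hwp, hxp⟩)),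
        inTwo_mk hwx.symm hxp hwp hxq hwq hpq⟩

lemma K4tri {V : Type*} {G : SimpleGraph V} (hbf : ¬ HasBowtie G) {a b c d y z : V}
    (hab : G.Adj a b) (hac : G.Adj a c) (had : G.Adj a d) (hbc : G.Adj b c)
    (hbd : G.Adj b d) (hcd : G.Adj c d) (hay : G.Adj a y) (haz : G.Adj a z)
    (hyz : G.Adj y z) : (y = b ∨ y = c ∨ y = d) ∧ (z = b ∨ z = c ∨ z = d) := by
  have s1 := share hbf hyz hbc hay haz hab hac
  have s2 := share hbf hyz hbd hay haz hab had
  have s3 := share hbf hyz hcd hay haz hac had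
  constructor
  · by_contra h
    push_neg at h
    obtain ⟨h1, h2, h3⟩ := h
    have z1 : z = b ∨ z = c := by tauto
    have z3 : z = c ∨ z = d := by tauto
    have z2 : z = b ∨ z = d := by tauto
    rcases z1 with rfl | rfl
    · rcases z3 with h | h
      · exact hbc.ne h
      · exact hbd.ne h
    · rcases z2 with h | h
      · exact hbc.ne' h
      · exact hcd.ne h
  · by_contra h
    push_neg at h
    obtain ⟨h1, h2, h3⟩ := h
    have z1 : y = b ∨ y = c := by tauto
    have z3 : y = c ∨ y = d := by tauto
    have z2 : y = b ∨ y = d := by tauto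
    rcases z1 with rfl | rfl
    · rcases z3 with h | h
      · exact hbc.ne h
      · exact hbd.ne h
    · rcases z2 with h | h
      · exact hbc.ne' h
      · exact hcd.ne h

lemma caseA {V : Type*} [DecidableEq V] {G : SimpleGraph V} (hbf : ¬ HasBowtie G)
    {a b c d : V} (hab : G.Adj a b) (hac : G.Adj a c) (had : G.Adj a d)
    (hbc : G.Adj b c) (hbd : G.Adj b d) (hcd : G.Adj c d) :
    {u | (triEdges G).Reachable a u ∧ InTwoTriangles G u} = {a, b, c, d} := by
  set S : Set V := {u | u = a ∨ u = b ∨ u = c ∨ u = d} with hSdef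
  have hcl : ∀ u u', u ∈ S → (triEdges G).Adj u u' → u' ∈ S := by
    intro u u' hu hadj
    obtain ⟨h1, z, h2, h3⟩ := triEdges_adj.mp hadj
    rcases hu with rfl | rfl | rfl | rfl
    · have := (K4tri hbf hab hac had hbc hbd hcd h1 h2 h3).1
      tauto
    · have := (K4tri hbf hab.symm hbc hbd hac had hcd h1 h2 h3).1
      tauto
    · have := (K4tri hbf hac.symm hbc.symm hcd hab had hbd h1 h2 h3).1
      tauto
    · have := (K4tri hbf had.symm hbd.symm hcd.symm hab hac hbc h1 h2 h3).1
      tauto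
  ext u
  simp only [Set.mem_setOf_eq, Set.mem_insert_iff, Set.mem_singleton_iff]
  constructor
  · rintro ⟨hr, _⟩
    exact reach_closed hcl hr (Or.inl rfl)
  · have t2a : InTwoTriangles G a := inTwo_mk hab hac hbc had hbd hcd.ne
    have t2b : InTwoTriangles G b := inTwo_mk hab.symm hbc hac hbd had hcd.ne
    have t2c : InTwoTriangles G c := inTwo_mk hac.symm hbc.symm hab hcd had hbd.ne
    have t2d : InTwoTriangles G d := inTwo_mk had.symm hbd.symm hab hcd.symm hac hbc.ne
    rintro (rfl | rfl | rfl | rfl)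
    · exact ⟨SimpleGraph.Reachable.refl u, t2a⟩
    · exact ⟨(SimpleGraph.Adj.reachable (triEdges_adj.mpr ⟨hab, c, hac, hbc⟩)), t2b⟩
    · exact ⟨(SimpleGraph.Adj.reachable (triEdges_adj.mpr ⟨hac, b, hab, hbc.symm⟩)), t2c⟩
    · exact ⟨(SimpleGraph.Adj.reachable (triEdges_adj.mpr ⟨had, b, hab, hbd.symm⟩)), t2d⟩

lemma main_key {V : Type*} [DecidableEq V] {G : SimpleGraph V} (hbf : ¬ HasBowtie G)
    {v w x p q : V} (hwx : G.Adj w x) (hwp : G.Adj w p) (hxp : G.Adj x p)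
    (hwq : G.Adj w q) (hxq : G.Adj x q) (hpq : p ≠ q)
    (hr : (triEdges G).Reachable v w) :
    (∃ a b : V, a ≠ b ∧ G.Adj a b ∧
        {u | (triEdges G).Reachable v u ∧ InTwoTriangles G u} = {a, b}) ∨
      (∃ s : Finset V, s.card = 4 ∧ (∀ a ∈ s, ∀ b ∈ s, a ≠ b → G.Adj a b) ∧
        {u | (triEdges G).Reachable v u ∧ InTwoTriangles G u} = ↑s) := by
  have hset : {u | (triEdges G).Reachable v u ∧ InTwoTriangles G u}
      = {u | (triEdges G).Reachable w u ∧ InTwoTriangles G u} := by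
    ext u
    simp only [Set.mem_setOf_eq]
    exact and_congr_left fun _ => ⟨fun h => hr.symm.trans h, fun h => hr.trans h⟩
  by_cases hA : G.Adj p q
  · refine Or.inr ⟨{w, x, p, q}, ?_, ?_, ?_⟩
    · rw [Finset.card_insert_of_notMem (by simp [hwx.ne, hwp.ne, hwq.ne]),
        Finset.card_insert_of_notMem (by simp [hxp.ne, hxq.ne]),
        Finset.card_insert_of_notMem (by simp [hpq]), Finset.card_singleton]
    · intro a ha b hb hne
      simp only [Finset.mem_insert, Finset.mem_singleton] at ha hb
      rcases ha with rfl | rfl | rfl | rfl <;> rcases hb with rfl | rfl | rfl | rfl <;>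
        first
        | exact absurd rfl hne
        | assumption
        | exact hwx.symm
        | exact hwp.symm
        | exact hwq.symm
        | exact hxp.symm
        | exact hxq.symm
        | exact hA.symm
    · rw [hset, caseA hbf hwx hwp hwq hxp hxq hA]
      simp only [Finset.coe_insert, Finset.coe_singleton]
  · exact Or.inl ⟨w, x, hwx.ne, hwx, hset.trans (caseB hbf hwx hwp hxp hwq hxq hpq hA)⟩

/-- In a good bowtie-free graph, the centre of any vertex `v` (the vertices lying in
two or more triangles within the `triEdges`-component of `v`) is either a single edge
or the vertex set of a `K₄`. -/
theorem goodGraph_vertex_centre {V : Type*} [DecidableEq V] (G : SimpleGraph V)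
    (hbf : ¬ HasBowtie G) (hg : GoodGraph G) (v : V) :
    (∃ a b : V, a ≠ b ∧ G.Adj a b ∧
        {w | (triEdges G).Reachable v w ∧ InTwoTriangles G w} = {a, b}) ∨
      (∃ s : Finset V, s.card = 4 ∧ (∀ a ∈ s, ∀ b ∈ s, a ≠ b → G.Adj a b) ∧
        {w | (triEdges G).Reachable v w ∧ InTwoTriangles G w} = ↑s) := by
  rcases hg v with ⟨n, hn, f, hf, s, rfl⟩ | ⟨f, hf, s, rfl⟩
  · have h01 : G.Adj (f (Sum.inl 0)) (f (Sum.inl 1)) := hf _ _ ⟨by simp, Or.inl rfl⟩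
    have hp0 : G.Adj (f (Sum.inl 0)) (f (Sum.inr ⟨0, by omega⟩)) := hf _ _ ⟨by simp, Or.inl rfl⟩
    have hp1 : G.Adj (f (Sum.inl 1)) (f (Sum.inr ⟨0, by omega⟩)) := hf _ _ ⟨by simp, Or.inl rfl⟩
    have hq0 : G.Adj (f (Sum.inl 0)) (f (Sum.inr ⟨1, by omega⟩)) := hf _ _ ⟨by simp, Or.inl rfl⟩
    have hq1 : G.Adj (f (Sum.inl 1)) (f (Sum.inr ⟨1, by omega⟩)) := hf _ _ ⟨by simp, Or.inl rfl⟩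
    have hpq : f (Sum.inr ⟨0, by omega⟩) ≠ f (Sum.inr ⟨1, by omega⟩) := by
      intro h
      have := f.injective h
      simp at this
    have hr : (triEdges G).Reachable (f s) (f (Sum.inl 0)) := by
      rcases s with i | j
      · fin_cases i
        · exact SimpleGraph.Reachable.refl _
        · exact (triEdges_adj.mpr ⟨h01.symm, _, hp1, hp0⟩).reachable
      · exact (triEdges_adj.mpr ⟨hf (Sum.inr j) (Sum.inl 0) ⟨by simp, Or.inr rfl⟩,
          f (Sum.inl 1), hf (Sum.inr j) (Sum.inl 1) ⟨by simp, Or.inr rfl⟩, h01⟩).reachable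
    exact main_key hbf h01 hp0 hp1 hq0 hq1 hpq hr
  · have adj : ∀ i j : Fin 4, i ≠ j → G.Adj (f i) (f j) := fun i j h => hf _ _ (by simp [h])
    fin_cases s
    · exact main_key hbf (adj 0 1 (by decide)) (adj 0 2 (by decide)) (adj 1 2 (by decide))
        (adj 0 3 (by decide)) (adj 1 3 (by decide)) (f.injective.ne (by decide))
        (SimpleGraph.Reachable.refl _)
    · exact main_key hbf (adj 1 0 (by decide)) (adj 1 2 (by decide)) (adj 0 2 (by decide))
        (adj 1 3 (by decide)) (adj 0 3 (by decide)) (f.injective.ne (by decide))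
        (SimpleGraph.Reachable.refl _)
    · exact main_key hbf (adj 2 0 (by decide)) (adj 2 1 (by decide)) (adj 0 1 (by decide))
        (adj 2 3 (by decide)) (adj 0 3 (by decide)) (f.injective.ne (by decide))
        (SimpleGraph.Reachable.refl _)
    · exact main_key hbf (adj 3 0 (by decide)) (adj 3 1 (by decide)) (adj 0 1 (by decide))
        (adj 3 2 (by decide)) (adj 0 2 (by decide)) (f.injective.ne (by decide))
        (SimpleGraph.Reachable.refl _)
end
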